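/- arXiv:2002.00304 — 3 statements merged into one kernel-verified Lean document; each statement's English description precedes it below -/
import Mathlib

section
/- Let R be an alternative ring with a nontrivial idempotent e₁ satisfying conditions (i) and (ii). Let D : R → R be a map (not assumed additive) satisfying D([[x,y],z]) = [[D(x),y],z] + [[x,D(y)],z] + [[x,y],D(z)] for all x, y, z ∈ R. Then D is almost additive: for all a, b ∈ R there exists w ∈ Z(R) such that D(a + b) = D(a) + D(b) + w. -/
/-- The commutative center of a (possibly non-associative, non-unital) ring. -/
def rctr (R : Type*) [NonUnitalNonAssocRing R] : Set R := {z | ∀ x, z * x = x * z}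

/-- `R` is an alternative ring. -/
def IsAlt (R : Type*) [NonUnitalNonAssocRing R] : Prop :=
  ∀ x y : R, (x * x) * y = x * (x * y) ∧ (y * x) * x = y * (x * x)

/-- Peirce components relative to an idempotent `e`. -/
def P11 {R : Type*} [NonUnitalNonAssocRing R] (e : R) : Set R := {x | e * x = x ∧ x * e = x}
def P12 {R : Type*} [NonUnitalNonAssocRing R] (e : R) : Set R := {x | e * x = x ∧ x * e = 0}
def P21 {R : Type*} [NonUnitalNonAssocRing R] (e : R) : Set R := {x | e * x = 0 ∧ x * e = x}
def P22 {R : Type*} [NonUnitalNonAssocRing R] (e : R) : Set R := {x | e * x = 0 ∧ x * e = 0}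

/-- The iterated commutator `p_n`: `p_1(x) = x`,
`p_n(x_1,…,x_n) = [p_{n-1}(x_1,…,x_{n-1}), x_n]`. -/
def pn {R : Type*} [NonUnitalNonAssocRing R] : (n : ℕ) → (Fin n → R) → R
  | 0, _ => 0
  | 1, x => x 0
  | (m+2), x =>
      pn (m+1) (fun i => x i.castSucc) * x (Fin.last (m+1))
        - x (Fin.last (m+1)) * pn (m+1) (fun i => x i.castSucc)

/-- A (not necessarily additive) map `D` is a multiplicative Lie `n`-derivation. -/
def IsMultLieNDeriv {R : Type*} [NonUnitalNonAssocRing R] (n : ℕ) (D : R → R) : Prop :=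
  ∀ x : Fin n → R, D (pn n x) = ∑ i : Fin n, pn n (Function.update x i (D (x i)))

namespace Stmt6Aux

variable {R : Type*} [NonUnitalNonAssocRing R]

/-- double commutator `[[x,y],z]` -/
def TT (x y z : R) : R := (x * y - y * x) * z - z * (x * y - y * x)

lemma eq_of_abel {x y a b : R} (h : a = b) (hid : x - y = a - b) : x = y := by
  rw [h, sub_self] at hid; exact sub_eq_zero.mp hid

/-- linearized left alternativity -/
lemma linL (halt : IsAlt R) (a b c : R) :
    (a * b) * c + (b * a) * c = a * (b * c) + b * (a * c) := by
  have h := (halt (a + b) c).1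
  have ha := (halt a c).1
  have hb := (halt b c).1
  have key : (a * b) * c + (b * a) * c - (a * (b * c) + b * (a * c))
      = (((a + b) * (a + b)) * c - (a + b) * ((a + b) * c))
        - (((a * a) * c) - a * (a * c)) - (((b * b) * c) - b * (b * c)) := by
    simp only [mul_add, add_mul]; abel
  rw [h, ha, hb] at key
  simp only [sub_self, sub_zero, zero_sub, neg_zero] at key
  exact sub_eq_zero.mp key

/-- linearized right alternativity -/
lemma linR (halt : IsAlt R) (a b c : R) :
    (a * b) * c + (a * c) * b = a * (b * c) + a * (c * b) := by
  have h := (halt (b + c) a).2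
  have hb := (halt b a).2
  have hc := (halt c a).2
  have key : (a * b) * c + (a * c) * b - (a * (b * c) + a * (c * b))
      = ((a * (b + c)) * (b + c) - a * ((b + c) * (b + c)))
        - (((a * b) * b) - a * (b * b)) - (((a * c) * c) - a * (c * c)) := by
    simp only [mul_add, add_mul]; abel
  rw [h, hb, hc] at key
  simp only [sub_self, sub_zero, zero_sub, neg_zero] at key
  exact sub_eq_zero.mp key

section WithE

variable {e : R}

lemma eLe (halt : IsAlt R) (he : e * e = e) (r : R) : e * (e * r) = e * r := by
  have h := (halt e r).1; rw [he] at h; exact h.symm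

lemma eRe (halt : IsAlt R) (he : e * e = e) (r : R) : (r * e) * e = r * e := by
  have h := (halt e r).2; rw [he] at h; exact h

lemma flexE (halt : IsAlt R) (he : e * e = e) (r : R) : (e * r) * e = e * (r * e) := by
  have h := linL halt e r e
  rw [he, eRe halt he r] at h
  exact add_right_cancel h

-- Peirce multiplication rules
lemma m1212a (halt : IsAlt R) {m p : R} (hm1 : e * m = m) (hm2 : m * e = 0)
    (hp1 : e * p = p) : e * (m * p) = 0 := by
  have h := linL halt e m p
  rw [hm1, hm2, hp1, zero_mul] at h
  exact eq_of_abel h.symm (by abel)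

lemma m1212b (halt : IsAlt R) {m p : R} (hm2 : m * e = 0) (hp1 : e * p = p)
    (hp2 : p * e = 0) : (m * p) * e = m * p := by
  have h := linR halt m p e
  rw [hm2, hp1, hp2, zero_mul, mul_zero] at h
  exact eq_of_abel h (by abel)

lemma m2121a (halt : IsAlt R) {n q : R} (hn1 : e * n = 0) (hn2 : n * e = n)
    (hq1 : e * q = 0) : e * (n * q) = n * q := by
  have h := linL halt e n q
  rw [hn1, hn2, hq1, zero_mul, mul_zero] at h
  exact eq_of_abel h.symm (by abel)

lemma m2121b (halt : IsAlt R) {n q : R} (hn2 : n * e = n) (hq1 : e * q = 0)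
    (hq2 : q * e = q) : (n * q) * e = 0 := by
  have h := linR halt n q e
  rw [hn2, hq2, hq1, mul_zero] at h
  exact eq_of_abel h (by abel)

lemma m1221a (halt : IsAlt R) {m n : R} (hm1 : e * m = m) (hm2 : m * e = 0)
    (hn1 : e * n = 0) : e * (m * n) = m * n := by
  have h := linL halt e m n
  rw [hm1, hm2, hn1, zero_mul, mul_zero] at h
  exact eq_of_abel h.symm (by abel)

lemma m1221b (halt : IsAlt R) {m n : R} (hm2 : m * e = 0) (hn1 : e * n = 0)
    (hn2 : n * e = n) : (m * n) * e = m * n := by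
  have h := linR halt m n e
  rw [hm2, hn2, hn1, zero_mul, mul_zero] at h
  exact eq_of_abel h (by abel)

lemma m2112a (halt : IsAlt R) {n m : R} (hn1 : e * n = 0) (hn2 : n * e = n)
    (hm1 : e * m = m) : e * (n * m) = 0 := by
  have h := linL halt e n m
  rw [hn1, hn2, hm1, zero_mul] at h
  exact eq_of_abel h.symm (by abel)

lemma m2112b (halt : IsAlt R) {n m : R} (hn2 : n * e = n) (hm1 : e * m = m)
    (hm2 : m * e = 0) : (n * m) * e = 0 := by
  have h := linR halt n m e
  rw [hn2, hm2, hm1, mul_zero] at h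
  exact eq_of_abel h (by abel)

/-- `R22 * R12 = 0` -/
lemma m2212 (halt : IsAlt R) {z x : R} (hz1 : e * z = 0) (hz2 : z * e = 0)
    (hx1 : e * x = x) (hx2 : x * e = 0) : z * x = 0 := by
  have h1 := linR halt z e x
  rw [hz2, hx1, hx2, zero_mul, mul_zero] at h1
  -- h1 : 0 + (z*x)*e = z*x + 0
  have h2 := linL halt z x e
  rw [hz2, hx2, mul_zero, mul_zero] at h2
  -- h2 : (z*x)*e + (x*z)*e = 0 + 0
  have h3 := linR halt x z e
  rw [hx2, hz2, hz1, zero_mul, mul_zero] at h3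
  -- h3 : (x*z)*e + 0 = 0 + 0
  have hxz : (x * z) * e = 0 := eq_of_abel h3 (by abel)
  have hzx1 : (z * x) * e = z * x := eq_of_abel h1 (by abel)
  have hzx2 : (z * x) * e = -((x * z) * e) := eq_of_abel h2 (by abel)
  rw [hxz, neg_zero] at hzx2
  rw [hzx2] at hzx1
  exact hzx1.symm

/-- `R12 * R11 = 0` -/
lemma m1211 (halt : IsAlt R) {x a : R} (hx1 : e * x = x) (hx2 : x * e = 0)
    (ha1 : e * a = a) (ha2 : a * e = a) : x * a = 0 := by
  have h1 := linR halt x e a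
  rw [hx2, ha1, ha2, zero_mul] at h1
  -- h1 : 0 + (x*a)*e = x*a + x*a
  have h3 := linR halt a x e
  rw [ha2, hx2, hx1, mul_zero] at h3
  -- h3 : (a*x)*e + a*x = 0 + a*x
  have hax : (a * x) * e = 0 := eq_of_abel h3 (by abel)
  have h2 := linL halt x a e
  rw [ha2, hx2, mul_zero, hax] at h2
  -- h2 : (x*a)*e + 0 = x*a + 0
  have hxa1 : (x * a) * e = x * a + x * a := eq_of_abel h1 (by abel)
  have hxa2 : (x * a) * e = x * a := eq_of_abel h2 (by abel)
  rw [hxa2] at hxa1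
  exact eq_of_abel hxa1.symm (by abel)

/-- `R11 * R12 ⊆ R12` -/
lemma m1112a (halt : IsAlt R) {a x : R} (ha1 : e * a = a) (ha2 : a * e = a)
    (hx1 : e * x = x) : e * (a * x) = a * x := by
  have h := linL halt e a x
  rw [ha1, ha2, hx1] at h
  exact eq_of_abel h.symm (by abel)

lemma m1112b (halt : IsAlt R) {a x : R} (ha2 : a * e = a) (hx1 : e * x = x)
    (hx2 : x * e = 0) : (a * x) * e = 0 := by
  have h := linR halt a x e
  rw [ha2, hx2, hx1, mul_zero] at h
  exact eq_of_abel h (by abel)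

/-- `R12 * R22 ⊆ R12` -/
lemma m1222a (halt : IsAlt R) {x z : R} (hx1 : e * x = x) (hx2 : x * e = 0)
    (hz1 : e * z = 0) : e * (x * z) = x * z := by
  have h := linL halt e x z
  rw [hx1, hx2, hz1, zero_mul, mul_zero] at h
  exact eq_of_abel h.symm (by abel)

lemma m1222b (halt : IsAlt R) {x z : R} (hx2 : x * e = 0) (hz1 : e * z = 0)
    (hz2 : z * e = 0) : (x * z) * e = 0 := by
  have h := linR halt x z e
  rw [hx2, hz2, hz1, zero_mul, mul_zero] at h
  exact eq_of_abel h (by abel)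

end WithE

-- additivity of TT in each slot
lemma TT_add1 (x x' y z : R) : TT (x + x') y z = TT x y z + TT x' y z := by
  simp only [TT, add_mul, mul_add, sub_mul, mul_sub]; abel

lemma TT_sub1 (x x' y z : R) : TT (x - x') y z = TT x y z - TT x' y z := by
  simp only [TT, sub_mul, mul_sub]; abel

lemma TT_sub2 (x y y' z : R) : TT x (y - y') z = TT x y z - TT x y' z := by
  simp only [TT, sub_mul, mul_sub]; abel

end Stmt6Aux

open Stmt6Aux in
theorem stmt6 {R : Type*} [NonUnitalNonAssocRing R] (halt : IsAlt R)
    (e₁ : R) (he : e₁ * e₁ = e₁) (hne : e₁ ≠ 0)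
    (hnu : ¬ ∀ x : R, e₁ * x = x ∧ x * e₁ = x)
    (hcondi : ∀ a ∈ P11 e₁, ∀ b ∈ P22 e₁,
      (∀ x ∈ P12 e₁, (a + b) * x = x * (a + b)) → a + b ∈ rctr R)
    (hcondii : ∀ a ∈ P11 e₁, ∀ b ∈ P22 e₁,
      (∀ x ∈ P21 e₁, (a + b) * x = x * (a + b)) → a + b ∈ rctr R)
    (D : R → R)
    (hD : ∀ x y z : R,
      D ((x * y - y * x) * z - z * (x * y - y * x)) =
        ((D x * y - y * D x) * z - z * (D x * y - y * D x)) +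
        ((x * D y - D y * x) * z - z * (x * D y - D y * x)) +
        ((x * y - y * x) * D z - D z * (x * y - y * x))) :
    ∀ a b : R, ∃ w ∈ rctr R, D (a + b) = D a + D b + w := by
  -- abbreviations for the one-idempotent lemmas
  have eL : ∀ r : R, e₁ * (e₁ * r) = e₁ * r := eLe halt he
  have eR : ∀ r : R, (r * e₁) * e₁ = r * e₁ := eRe halt he
  have fE : ∀ r : R, (e₁ * r) * e₁ = e₁ * (r * e₁) := flexE halt he
  -- D in terms of TT
  have hDT : ∀ x y z : R, D (TT x y z) = TT (D x) y z + TT x (D y) z + TT x y (D z) := by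
    intro x y z; simpa only [TT] using hD x y z
  have D0 : D 0 = 0 := by
    have h := hD 0 0 0
    simpa using h
  -- the fundamental quasi-additivity identity
  have K1 : ∀ x₁ x₂ y z : R,
      TT (D (x₁ + x₂) - D x₁ - D x₂) y z
        = D (TT x₁ y z + TT x₂ y z) - D (TT x₁ y z) - D (TT x₂ y z) := by
    intro x₁ x₂ y z
    have h := hDT (x₁ + x₂) y z
    have h1 := hDT x₁ y z
    have h2 := hDT x₂ y z
    rw [TT_add1 x₁ x₂ y z] at h
    have hAB : D (x₁ + x₂) = (D (x₁ + x₂) - D x₁ - D x₂) + D x₁ + D x₂ := by abel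
    rw [hAB, TT_add1, TT_add1, TT_add1 x₁ x₂ (D y) z, TT_add1 x₁ x₂ y (D z)] at h
    rw [h, h1, h2]
    abel
  -- basic TT values
  have v3 : TT e₁ e₁ e₁ = 0 := by
    simp only [TT, sub_self, zero_mul, mul_zero, sub_zero]
  have v4 : ∀ n : R, e₁ * n = 0 → n * e₁ = n → TT n e₁ e₁ = n := by
    intro n hn1 hn2
    simp only [TT, neg_mul, mul_neg, neg_neg, sub_mul, mul_sub, hn1, hn2, zero_mul, mul_zero, sub_zero, zero_sub]
    try abel
  have v4' : ∀ m : R, e₁ * m = m → m * e₁ = 0 → TT m e₁ e₁ = m := by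
    intro m hm1 hm2
    simp only [TT, neg_mul, mul_neg, neg_neg, sub_mul, mul_sub, hm1, hm2, zero_mul, mul_zero, sub_zero, zero_sub]
    try abel
  have v5 : ∀ m : R, e₁ * m = m → m * e₁ = 0 → TT e₁ m e₁ = -m := by
    intro m hm1 hm2
    simp only [TT, neg_mul, mul_neg, neg_neg, sub_mul, mul_sub, hm1, hm2, zero_mul, mul_zero, sub_zero, zero_sub]
    try abel
  have v5' : ∀ n : R, e₁ * n = 0 → n * e₁ = n → TT e₁ n e₁ = -n := by
    intro n hn1 hn2
    simp only [TT, neg_mul, mul_neg, neg_neg, sub_mul, mul_sub, hn1, hn2, zero_mul, mul_zero, sub_zero, zero_sub]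
    try abel
  have v1 : ∀ m : R, e₁ * m = m → m * e₁ = 0 → TT e₁ (e₁ - m) e₁ = m := by
    intro m hm1 hm2
    simp only [TT, neg_mul, mul_neg, neg_neg, mul_sub, sub_mul, he, hm1, hm2, zero_mul, mul_zero, sub_zero, zero_sub]
    try abel
  have v1' : ∀ n : R, e₁ * n = 0 → n * e₁ = n → TT e₁ (e₁ - n) e₁ = n := by
    intro n hn1 hn2
    simp only [TT, neg_mul, mul_neg, neg_neg, mul_sub, sub_mul, he, hn1, hn2, zero_mul, mul_zero, sub_zero, zero_sub]
    try abel
  -- TT n (e₁ - m) e₁ = n  for n ∈ P21, m ∈ P12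
  have v2 : ∀ m n : R, e₁ * m = m → m * e₁ = 0 → e₁ * n = 0 → n * e₁ = n →
      TT n (e₁ - m) e₁ = n := by
    intro m n hm1 hm2 hn1 hn2
    have hnma : e₁ * (n * m) = 0 := m2112a halt hn1 hn2 hm1
    have hnmb : (n * m) * e₁ = 0 := m2112b halt hn2 hm1 hm2
    have hmna : e₁ * (m * n) = m * n := m1221a halt hm1 hm2 hn1
    have hmnb : (m * n) * e₁ = m * n := m1221b halt hm2 hn1 hn2
    simp only [TT, mul_sub, sub_mul, neg_mul, mul_neg, neg_neg, hm1, hm2, hn1, hn2,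
      hnma, hnmb, hmna, hmnb, zero_mul, mul_zero, sub_zero, zero_sub, neg_zero]
    try abel
  -- TT m (e₁ - n) e₁ = m for m ∈ P12, n ∈ P21
  have v2' : ∀ n m : R, e₁ * n = 0 → n * e₁ = n → e₁ * m = m → m * e₁ = 0 →
      TT m (e₁ - n) e₁ = m := by
    intro n m hn1 hn2 hm1 hm2
    have hnma : e₁ * (n * m) = 0 := m2112a halt hn1 hn2 hm1
    have hnmb : (n * m) * e₁ = 0 := m2112b halt hn2 hm1 hm2
    have hmna : e₁ * (m * n) = m * n := m1221a halt hm1 hm2 hn1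
    have hmnb : (m * n) * e₁ = m * n := m1221b halt hm2 hn1 hn2
    simp only [TT, mul_sub, sub_mul, neg_mul, mul_neg, neg_neg, hm1, hm2, hn1, hn2,
      hnma, hnmb, hmna, hmnb, zero_mul, mul_zero, sub_zero, zero_sub, neg_zero]
    try abel
  -- TT n m e₁ = 0 for n ∈ P21, m ∈ P12
  have v6 : ∀ m n : R, e₁ * m = m → m * e₁ = 0 → e₁ * n = 0 → n * e₁ = n →
      TT n m e₁ = 0 := by
    intro m n hm1 hm2 hn1 hn2
    have hnma : e₁ * (n * m) = 0 := m2112a halt hn1 hn2 hm1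
    have hnmb : (n * m) * e₁ = 0 := m2112b halt hn2 hm1 hm2
    have hmna : e₁ * (m * n) = m * n := m1221a halt hm1 hm2 hn1
    have hmnb : (m * n) * e₁ = m * n := m1221b halt hm2 hn1 hn2
    simp only [TT, mul_sub, sub_mul, neg_mul, mul_neg, neg_neg, hnma, hnmb, hmna, hmnb,
      zero_mul, mul_zero, zero_sub, sub_zero, neg_zero]
    try abel
  have v6' : ∀ m n : R, e₁ * m = m → m * e₁ = 0 → e₁ * n = 0 → n * e₁ = n →
      TT m n e₁ = 0 := by
    intro m n hm1 hm2 hn1 hn2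
    have hnma : e₁ * (n * m) = 0 := m2112a halt hn1 hn2 hm1
    have hnmb : (n * m) * e₁ = 0 := m2112b halt hn2 hm1 hm2
    have hmna : e₁ * (m * n) = m * n := m1221a halt hm1 hm2 hn1
    have hmnb : (m * n) * e₁ = m * n := m1221b halt hm2 hn1 hn2
    simp only [TT, mul_sub, sub_mul, neg_mul, mul_neg, neg_neg, hnma, hnmb, hmna, hmnb,
      zero_mul, mul_zero, zero_sub, sub_zero, neg_zero]
    try abel
  -- TT p (e₁ - m) e₁ = p - (p*m - m*p) for p, m ∈ P12
  have v7 : ∀ m p : R, e₁ * m = m → m * e₁ = 0 → e₁ * p = p → p * e₁ = 0 →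
      TT p (e₁ - m) e₁ = p - (p * m - m * p) := by
    intro m p hm1 hm2 hp1 hp2
    have hpma : e₁ * (p * m) = 0 := m1212a halt hp1 hp2 hm1
    have hpmb : (p * m) * e₁ = p * m := m1212b halt hp2 hm1 hm2
    have hmpa : e₁ * (m * p) = 0 := m1212a halt hm1 hm2 hp1
    have hmpb : (m * p) * e₁ = m * p := m1212b halt hm2 hp1 hp2
    simp only [TT, mul_sub, sub_mul, neg_mul, mul_neg, neg_neg, hm1, hm2, hp1, hp2,
      hpma, hpmb, hmpa, hmpb, zero_mul, mul_zero, sub_zero, zero_sub, neg_zero]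
    try abel
  -- TT p m e₁ = p*m - m*p for p, m ∈ P12
  have v8 : ∀ m p : R, e₁ * m = m → m * e₁ = 0 → e₁ * p = p → p * e₁ = 0 →
      TT p m e₁ = p * m - m * p := by
    intro m p hm1 hm2 hp1 hp2
    have hpma : e₁ * (p * m) = 0 := m1212a halt hp1 hp2 hm1
    have hpmb : (p * m) * e₁ = p * m := m1212b halt hp2 hm1 hm2
    have hmpa : e₁ * (m * p) = 0 := m1212a halt hm1 hm2 hp1
    have hmpb : (m * p) * e₁ = m * p := m1212b halt hm2 hp1 hp2
    simp only [TT, mul_sub, sub_mul, neg_mul, mul_neg, neg_neg, hpma, hpmb, hmpa, hmpb,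
      zero_mul, mul_zero, zero_sub, sub_zero, neg_zero]
    try abel
  -- TT q (e₁ - n) e₁ = q + (q*n - n*q) for q, n ∈ P21
  have v7' : ∀ n q : R, e₁ * n = 0 → n * e₁ = n → e₁ * q = 0 → q * e₁ = q →
      TT q (e₁ - n) e₁ = q + (q * n - n * q) := by
    intro n q hn1 hn2 hq1 hq2
    have hqna : e₁ * (q * n) = q * n := m2121a halt hq1 hq2 hn1
    have hqnb : (q * n) * e₁ = 0 := m2121b halt hq2 hn1 hn2
    have hnqa : e₁ * (n * q) = n * q := m2121a halt hn1 hn2 hq1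
    have hnqb : (n * q) * e₁ = 0 := m2121b halt hn2 hq1 hq2
    simp only [TT, mul_sub, sub_mul, neg_mul, mul_neg, neg_neg, hn1, hn2, hq1, hq2,
      hqna, hqnb, hnqa, hnqb, zero_mul, mul_zero, sub_zero, zero_sub, neg_zero]
    try abel
  -- TT q n e₁ = -(q*n - n*q) for q, n ∈ P21
  have v8' : ∀ n q : R, e₁ * n = 0 → n * e₁ = n → e₁ * q = 0 → q * e₁ = q →
      TT q n e₁ = -(q * n - n * q) := by
    intro n q hn1 hn2 hq1 hq2
    have hqna : e₁ * (q * n) = q * n := m2121a halt hq1 hq2 hn1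
    have hqnb : (q * n) * e₁ = 0 := m2121b halt hq2 hn1 hn2
    have hnqa : e₁ * (n * q) = n * q := m2121a halt hn1 hn2 hq1
    have hnqb : (n * q) * e₁ = 0 := m2121b halt hn2 hq1 hq2
    simp only [TT, mul_sub, sub_mul, neg_mul, mul_neg, neg_neg, hqna, hqnb, hnqa, hnqb,
      zero_mul, mul_zero, zero_sub, sub_zero, neg_zero]
    try abel
  ------------------------------------------------------------------
  -- Step A : mixed additivity  D(m + n) = D m + D n,  m ∈ P12, n ∈ P21
  ------------------------------------------------------------------
  have stepA : ∀ m n : R, e₁ * m = m → m * e₁ = 0 → e₁ * n = 0 → n * e₁ = n →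
      D (m + n) = D m + D n := by
    intro m n hm1 hm2 hn1 hn2
    have h := K1 e₁ n (e₁ - m) e₁
    rw [v1 m hm1 hm2, v2 m n hm1 hm2 hn1 hn2] at h
    -- h : TT W (e₁ - m) e₁ = D (m + n) - D m - D n
    have hW1 := K1 e₁ n e₁ e₁
    rw [v3, v4 n hn1 hn2, zero_add, D0] at hW1
    -- hW1 : TT W e₁ e₁ = D n - 0 - D n
    have hW1' : TT (D (e₁ + n) - D e₁ - D n) e₁ e₁ = 0 := by rw [hW1]; abel
    have hW2 := K1 e₁ n m e₁
    rw [v5 m hm1 hm2, v6 m n hm1 hm2 hn1 hn2, add_zero, D0] at hW2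
    -- hW2 : TT W m e₁ = D (-m) - D (-m) - 0
    have hW2' : TT (D (e₁ + n) - D e₁ - D n) m e₁ = 0 := by rw [hW2]; abel
    have hsplit : TT (D (e₁ + n) - D e₁ - D n) (e₁ - m) e₁
        = TT (D (e₁ + n) - D e₁ - D n) e₁ e₁ - TT (D (e₁ + n) - D e₁ - D n) m e₁ :=
      TT_sub2 _ _ _ _
    rw [hsplit, hW1', hW2'] at h
    -- h : 0 - 0 = D (m+n) - D m - D n
    exact eq_of_abel h.symm (by abel)
  ------------------------------------------------------------------
  -- Step B : additivity on P12
  ------------------------------------------------------------------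
  have stepB : ∀ m p : R, e₁ * m = m → m * e₁ = 0 → e₁ * p = p → p * e₁ = 0 →
      D (m + p) = D m + D p := by
    intro m p hm1 hm2 hp1 hp2
    -- c := p*m - m*p ∈ P21
    have hc1 : e₁ * (p * m - m * p) = 0 := by
      rw [mul_sub, m1212a halt hp1 hp2 hm1, m1212a halt hm1 hm2 hp1, sub_zero]
    have hc2 : (p * m - m * p) * e₁ = p * m - m * p := by
      rw [sub_mul, m1212b halt hp2 hm1 hm2, m1212b halt hm2 hp1 hp2]
    have h := K1 e₁ (p + (p * m - m * p)) (e₁ - m) e₁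
    rw [v1 m hm1 hm2, TT_add1, v7 m p hm1 hm2 hp1 hp2,
      v2 m (p * m - m * p) hm1 hm2 hc1 hc2] at h
    have hx : m + (p - (p * m - m * p) + (p * m - m * p)) = m + p := by abel
    rw [show (p - (p * m - m * p) + (p * m - m * p)) = p by abel] at h
    -- h : TT W (e₁-m) e₁ = D (m + p) - D m - D p
    have hW1 := K1 e₁ (p + (p * m - m * p)) e₁ e₁
    rw [v3, TT_add1, v4' p hp1 hp2, v4 (p * m - m * p) hc1 hc2, zero_add, D0] at hW1
    have hW1' : TT (D (e₁ + (p + (p * m - m * p))) - D e₁ - D (p + (p * m - m * p)))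
        e₁ e₁ = 0 := by rw [hW1]; abel
    have hW2 := K1 e₁ (p + (p * m - m * p)) m e₁
    rw [v5 m hm1 hm2, TT_add1, v8 m p hm1 hm2 hp1 hp2,
      v6 m (p * m - m * p) hm1 hm2 hc1 hc2, add_zero] at hW2
    -- hW2 : TT W m e₁ = D (-m + (p*m - m*p)) - D (-m) - D (p*m - m*p)
    have hnm1 : e₁ * (-m) = -m := by rw [mul_neg, hm1]
    have hnm2 : (-m) * e₁ = 0 := by rw [neg_mul, hm2, neg_zero]
    rw [stepA (-m) (p * m - m * p) hnm1 hnm2 hc1 hc2] at hW2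
    have hW2' : TT (D (e₁ + (p + (p * m - m * p))) - D e₁ - D (p + (p * m - m * p)))
        m e₁ = 0 := by rw [hW2]; abel
    have hsplit := TT_sub2 (D (e₁ + (p + (p * m - m * p))) - D e₁ - D (p + (p * m - m * p)))
      e₁ m e₁
    rw [hsplit, hW1', hW2'] at h
    exact eq_of_abel h.symm (by abel)
  ------------------------------------------------------------------
  -- Step B' : additivity on P21
  ------------------------------------------------------------------
  have stepB' : ∀ n q : R, e₁ * n = 0 → n * e₁ = n → e₁ * q = 0 → q * e₁ = q →
      D (n + q) = D n + D q := by
    intro n q hn1 hn2 hq1 hq2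
    -- c := q*n - n*q ∈ P12
    have hc1 : e₁ * (q * n - n * q) = q * n - n * q := by
      rw [mul_sub, m2121a halt hq1 hq2 hn1, m2121a halt hn1 hn2 hq1]
    have hc2 : (q * n - n * q) * e₁ = 0 := by
      rw [sub_mul, m2121b halt hq2 hn1 hn2, m2121b halt hn2 hq1 hq2, sub_zero]
    have h := K1 e₁ (q - (q * n - n * q)) (e₁ - n) e₁
    rw [v1' n hn1 hn2, TT_sub1 q (q * n - n * q) (e₁ - n) e₁, v7' n q hn1 hn2 hq1 hq2,
      v2' n (q * n - n * q) hn1 hn2 hc1 hc2] at h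
    rw [show (q + (q * n - n * q) - (q * n - n * q)) = q by abel] at h
    -- h : TT W (e₁-n) e₁ = D (n + q) - D n - D q
    have hW1 := K1 e₁ (q - (q * n - n * q)) e₁ e₁
    rw [v3, TT_sub1 q (q * n - n * q) e₁ e₁, v4 q hq1 hq2, v4' (q * n - n * q) hc1 hc2,
      zero_add, D0] at hW1
    have hW1' : TT (D (e₁ + (q - (q * n - n * q))) - D e₁ - D (q - (q * n - n * q)))
        e₁ e₁ = 0 := by rw [hW1]; abel
    have hW2 := K1 e₁ (q - (q * n - n * q)) n e₁
    rw [v5' n hn1 hn2, TT_sub1 q (q * n - n * q) n e₁, v8' n q hn1 hn2 hq1 hq2,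
      v6' (q * n - n * q) n hc1 hc2 hn1 hn2] at hW2
    -- hW2 : TT W n e₁ = D (-n + (-(q*n-n*q) - 0)) - ...
    rw [sub_zero] at hW2
    have hnc1 : e₁ * (-(q * n - n * q)) = -(q * n - n * q) := by rw [mul_neg, hc1]
    have hnc2 : (-(q * n - n * q)) * e₁ = 0 := by rw [neg_mul, hc2, neg_zero]
    have hnn1 : e₁ * (-n) = 0 := by rw [mul_neg, hn1, neg_zero]
    have hnn2 : (-n) * e₁ = -n := by rw [neg_mul, hn2]
    have hadd : (-n : R) + -(q * n - n * q) = -(q * n - n * q) + -n := by abel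
    rw [hadd, stepA (-(q * n - n * q)) (-n) hnc1 hnc2 hnn1 hnn2] at hW2
    have hW2' : TT (D (e₁ + (q - (q * n - n * q))) - D e₁ - D (q - (q * n - n * q)))
        n e₁ = 0 := by rw [hW2]; abel
    have hsplit := TT_sub2 (D (e₁ + (q - (q * n - n * q))) - D e₁ - D (q - (q * n - n * q)))
      e₁ n e₁
    rw [hsplit, hW1', hW2'] at h
    exact eq_of_abel h.symm (by abel)
  ------------------------------------------------------------------
  -- off-diagonal additivity
  ------------------------------------------------------------------
  have offadd : ∀ m n p q : R, e₁ * m = m → m * e₁ = 0 → e₁ * n = 0 → n * e₁ = n →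
      e₁ * p = p → p * e₁ = 0 → e₁ * q = 0 → q * e₁ = q →
      D ((m + n) + (p + q)) = D (m + n) + D (p + q) := by
    intro m n p q hm1 hm2 hn1 hn2 hp1 hp2 hq1 hq2
    have hmp1 : e₁ * (m + p) = m + p := by rw [mul_add, hm1, hp1]
    have hmp2 : (m + p) * e₁ = 0 := by rw [add_mul, hm2, hp2, add_zero]
    have hnq1 : e₁ * (n + q) = 0 := by rw [mul_add, hn1, hq1, add_zero]
    have hnq2 : (n + q) * e₁ = n + q := by rw [add_mul, hn2, hq2]
    rw [show ((m + n) + (p + q)) = ((m + p) + (n + q)) by abel,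
      stepA (m + p) (n + q) hmp1 hmp2 hnq1 hnq2,
      stepB m p hm1 hm2 hp1 hp2, stepB' n q hn1 hn2 hq1 hq2,
      stepA m n hm1 hm2 hn1 hn2, stepA p q hp1 hp2 hq1 hq2]
    abel
  ------------------------------------------------------------------
  -- Peirce components of an arbitrary element
  ------------------------------------------------------------------
  have comp12a : ∀ t : R, e₁ * (e₁ * t - e₁ * (t * e₁)) = e₁ * t - e₁ * (t * e₁) := by
    intro t; rw [mul_sub, eL t, eL (t * e₁)]
  have comp12b : ∀ t : R, (e₁ * t - e₁ * (t * e₁)) * e₁ = 0 := by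
    intro t
    rw [sub_mul, fE t, fE (t * e₁), eR t, sub_self]
  have comp21a : ∀ t : R, e₁ * (t * e₁ - e₁ * (t * e₁)) = 0 := by
    intro t; rw [mul_sub, eL (t * e₁), sub_self]
  have comp21b : ∀ t : R, (t * e₁ - e₁ * (t * e₁)) * e₁ = t * e₁ - e₁ * (t * e₁) := by
    intro t
    rw [sub_mul, eR t, fE (t * e₁), eR t]
  have comp12a' : ∀ u : R, e₁ * (e₁ * (u * e₁) - e₁ * u) = e₁ * (u * e₁) - e₁ * u := by
    intro u
    have h2 : e₁ * (e₁ * (u * e₁) - e₁ * u) = -(e₁ * (e₁ * u - e₁ * (u * e₁))) := by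
      rw [mul_sub, mul_sub]; abel
    rw [h2, comp12a u]; abel
  have comp12b' : ∀ u : R, (e₁ * (u * e₁) - e₁ * u) * e₁ = 0 := by
    intro u
    have h2 : (e₁ * (u * e₁) - e₁ * u) * e₁ = -((e₁ * u - e₁ * (u * e₁)) * e₁) := by
      rw [sub_mul, sub_mul]; abel
    rw [h2, comp12b u, neg_zero]
  -- TT s e₁ e₁ decomposes into P12 + P21 components
  have offTT : ∀ s : R, TT s e₁ e₁
      = (e₁ * s - e₁ * (s * e₁)) + (s * e₁ - e₁ * (s * e₁)) := by
    intro s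
    have h1 : (s * e₁ - e₁ * s) * e₁ = s * e₁ - e₁ * (s * e₁) := by
      rw [sub_mul, eR s, fE s]
    have h2 : e₁ * (s * e₁ - e₁ * s) = e₁ * (s * e₁) - e₁ * s := by
      rw [mul_sub, eL s]
    simp only [TT, h1, h2]
    abel
  -- any [s, e₁] decomposes
  have cmdec : ∀ s : R, s * e₁ - e₁ * s
      = (e₁ * (s * e₁) - e₁ * s) + (s * e₁ - e₁ * (s * e₁)) := by
    intro s; abel
  ------------------------------------------------------------------
  -- main argument
  ------------------------------------------------------------------
  intro a b
  set w : R := D (a + b) - D a - D b with hw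
  -- S1 : TT w e₁ e₁ = 0
  have S1 : TT w e₁ e₁ = 0 := by
    have h := K1 a b e₁ e₁
    have ha := offTT a
    have hb := offTT b
    have hoff := offadd (e₁ * a - e₁ * (a * e₁)) (a * e₁ - e₁ * (a * e₁))
      (e₁ * b - e₁ * (b * e₁)) (b * e₁ - e₁ * (b * e₁))
      (comp12a a) (comp12b a) (comp21a a) (comp21b a)
      (comp12a b) (comp12b b) (comp21a b) (comp21b b)
    rw [← ha, ← hb] at hoff
    rw [hoff] at h
    rw [hw, h]; abel
  -- S2 : w commutes with every element of P12
  have S2 : ∀ x : R, e₁ * x = x → x * e₁ = 0 → w * x = x * w := by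
    intro x hx1 hx2
    -- first: TT w x e₁ = 0
    have hTwx : TT w x e₁ = 0 := by
      have h := K1 a b x e₁
      set s : R := a * x - x * a with hs
      set t : R := b * x - x * b with ht
      have hsdec : TT a x e₁ = (e₁ * (s * e₁) - e₁ * s) + (s * e₁ - e₁ * (s * e₁)) := by
        simp only [TT]; rw [← hs]; exact cmdec s
      have htdec : TT b x e₁ = (e₁ * (t * e₁) - e₁ * t) + (t * e₁ - e₁ * (t * e₁)) := by
        simp only [TT]; rw [← ht]; exact cmdec t
      have hs12a := comp12a' s
      have hs12b := comp12b' s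
      have ht12a := comp12a' t
      have ht12b := comp12b' t
      have hoff := offadd (e₁ * (s * e₁) - e₁ * s) (s * e₁ - e₁ * (s * e₁))
        (e₁ * (t * e₁) - e₁ * t) (t * e₁ - e₁ * (t * e₁))
        hs12a hs12b (comp21a s) (comp21b s) ht12a ht12b (comp21a t) (comp21b t)
      rw [← hsdec, ← htdec] at hoff
      rw [hoff] at h
      rw [hw, h]; abel
    -- components of w
    have hoffw : (e₁ * w - e₁ * (w * e₁)) + (w * e₁ - e₁ * (w * e₁)) = 0 := by
      rw [← offTT w]; exact S1
    -- W11, W22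
    have hW11a : e₁ * (e₁ * (w * e₁)) = e₁ * (w * e₁) := eL (w * e₁)
    have hW11b : (e₁ * (w * e₁)) * e₁ = e₁ * (w * e₁) := by
      rw [fE (w * e₁), eR w]
    have hW22a : e₁ * (w - e₁ * w - w * e₁ + e₁ * (w * e₁)) = 0 := by
      rw [mul_add, mul_sub, mul_sub, eL w, eL (w * e₁)]
      abel
    have hW22b : (w - e₁ * w - w * e₁ + e₁ * (w * e₁)) * e₁ = 0 := by
      rw [add_mul, sub_mul, sub_mul, fE w, eR w, hW11b]
      abel
    have hsum : e₁ * (w * e₁) + (w - e₁ * w - w * e₁ + e₁ * (w * e₁)) = w := by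
      have hid : e₁ * (w * e₁) + (w - e₁ * w - w * e₁ + e₁ * (w * e₁)) - w
          = -((e₁ * w - e₁ * (w * e₁)) + (w * e₁ - e₁ * (w * e₁))) := by abel
      rw [hoffw, neg_zero] at hid
      exact sub_eq_zero.mp hid
    -- compute w * x - x * w
    have hzx : (w - e₁ * w - w * e₁ + e₁ * (w * e₁)) * x = 0 :=
      m2212 halt hW22a hW22b hx1 hx2
    have hxa : x * (e₁ * (w * e₁)) = 0 :=
      m1211 halt hx1 hx2 hW11a hW11b
    have hwx : w * x - x * w
        = (e₁ * (w * e₁)) * x - x * (w - e₁ * w - w * e₁ + e₁ * (w * e₁)) := by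
      have h1 : w * x = (e₁ * (w * e₁)) * x
          + (w - e₁ * w - w * e₁ + e₁ * (w * e₁)) * x := by
        rw [← add_mul, hsum]
      have h2 : x * w = x * (e₁ * (w * e₁))
          + x * (w - e₁ * w - w * e₁ + e₁ * (w * e₁)) := by
        rw [← mul_add, hsum]
      rw [h1, h2, hzx, hxa]
      abel
    -- the element t := W11*x - x*W22 lies in P12
    have hta : e₁ * ((e₁ * (w * e₁)) * x - x * (w - e₁ * w - w * e₁ + e₁ * (w * e₁)))
        = (e₁ * (w * e₁)) * x - x * (w - e₁ * w - w * e₁ + e₁ * (w * e₁)) := by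
      rw [mul_sub, m1112a halt hW11a hW11b hx1,
        m1222a halt hx1 hx2 hW22a]
    have htb : ((e₁ * (w * e₁)) * x - x * (w - e₁ * w - w * e₁ + e₁ * (w * e₁))) * e₁
        = 0 := by
      rw [sub_mul, m1112b halt hW11b hx1 hx2,
        m1222b halt hx2 hW22a hW22b, sub_zero]
    -- TT w x e₁ = -(w*x - x*w)
    have hTT : TT w x e₁ = -((e₁ * (w * e₁)) * x
        - x * (w - e₁ * w - w * e₁ + e₁ * (w * e₁))) := by
      simp only [TT]
      rw [hwx, htb, hta]
      abel
    rw [hTT] at hTwx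
    have h0 : (e₁ * (w * e₁)) * x - x * (w - e₁ * w - w * e₁ + e₁ * (w * e₁)) = 0 :=
      neg_eq_zero.mp hTwx
    have : w * x - x * w = 0 := by rw [hwx, h0]
    exact sub_eq_zero.mp this
  -- apply condition (i)
  have hW11mem : e₁ * (w * e₁) ∈ P11 e₁ := by
    constructor
    · exact eL (w * e₁)
    · rw [fE (w * e₁), eR w]
  have hW22mem : (w - e₁ * w - w * e₁ + e₁ * (w * e₁)) ∈ P22 e₁ := by
    constructor
    · rw [mul_add, mul_sub, mul_sub, eL w, eL (w * e₁)]; abel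
    · rw [add_mul, sub_mul, sub_mul, fE w, eR w, fE (w * e₁), eR w]; abel
  have hoffw : (e₁ * w - e₁ * (w * e₁)) + (w * e₁ - e₁ * (w * e₁)) = 0 := by
    rw [← offTT w]; exact S1
  have hsum : e₁ * (w * e₁) + (w - e₁ * w - w * e₁ + e₁ * (w * e₁)) = w := by
    have hid : e₁ * (w * e₁) + (w - e₁ * w - w * e₁ + e₁ * (w * e₁)) - w
        = -((e₁ * w - e₁ * (w * e₁)) + (w * e₁ - e₁ * (w * e₁))) := by abel
    rw [hoffw, neg_zero] at hid
    exact sub_eq_zero.mp hid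
  have hcomm : ∀ x ∈ P12 e₁,
      (e₁ * (w * e₁) + (w - e₁ * w - w * e₁ + e₁ * (w * e₁))) * x
        = x * (e₁ * (w * e₁) + (w - e₁ * w - w * e₁ + e₁ * (w * e₁))) := by
    intro x hx
    rw [hsum]
    exact S2 x hx.1 hx.2
  have hZ := hcondi (e₁ * (w * e₁)) hW11mem
    (w - e₁ * w - w * e₁ + e₁ * (w * e₁)) hW22mem hcomm
  rw [hsum] at hZ
  exact ⟨w, hZ, by rw [hw]; abel⟩
end

section
/- Let R be a 3-torsion free prime alternative ring with a nontrivial idempotent e₁. Then R satisfies conditions (1), (2) and (3): (1) if x ∈ R₁₂ and x*y = 0 for all y ∈ R₂₁ then x = 0, and if x ∈ R₂₁ and x*y = 0 for all y ∈ R₁₂ then x = 0; (2) if x ∈ R₁₁ and x*y = 0 for all y ∈ R₁₂ then x = 0, and if x ∈ R₁₁ and y*x = 0 for all y ∈ R₂₁ then x = 0; (3) if x ∈ R₂₂ and y*x = 0 for all y ∈ R₁₂ then x = 0, and if x ∈ R₂₂ and x*y = 0 for all y ∈ R₂₁ then x = 0. -/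
/-- A two-sided ideal of a possibly non-associative, non-unital ring, as a set. -/
def IsIdealSet {R : Type*} [NonUnitalNonAssocRing R] (I : Set R) : Prop :=
  (0 : R) ∈ I ∧ (∀ a ∈ I, ∀ b ∈ I, a + b ∈ I) ∧ (∀ a ∈ I, -a ∈ I) ∧
    ∀ r : R, ∀ a ∈ I, r * a ∈ I ∧ a * r ∈ I

/-- `R` is a prime ring: any two nonzero ideals have a nonzero product of elements. -/
def IsPrimeRing (R : Type*) [NonUnitalNonAssocRing R] : Prop :=
  ∀ A B : Set R, IsIdealSet A → IsIdealSet B → A ≠ {0} → B ≠ {0} →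
    ∃ a ∈ A, ∃ b ∈ B, a * b ≠ 0


namespace Stmt8Aux
variable {R : Type*} [NonUnitalNonAssocRing R]

def aso (x y z : R) : R := x*y*z - x*(y*z)

lemma aso11 (halt : IsAlt R) (x y : R) : aso x x y = 0 := sub_eq_zero_of_eq (halt x y).1
lemma aso22 (halt : IsAlt R) (x y : R) : aso y x x = 0 := sub_eq_zero_of_eq (halt x y).2

lemma swapL (halt : IsAlt R) (x y z : R) : aso x y z + aso y x z = 0 := by
  have key : aso x y z + aso y x z
      = aso (x+y) (x+y) z - aso x x z - aso y y z := by
    simp only [aso, add_mul, mul_add]; abel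
  rw [key, aso11 halt, aso11 halt, aso11 halt]; abel

lemma swapR (halt : IsAlt R) (x y z : R) : aso x y z + aso x z y = 0 := by
  have key : aso x y z + aso x z y
      = aso x (y+z) (y+z) - aso x y y - aso x z z := by
    simp only [aso, add_mul, mul_add]; abel
  rw [key, aso22 halt, aso22 halt, aso22 halt]; abel

lemma cyc (halt : IsAlt R) (x y z : R) : aso x y z = aso y z x := by
  have h1 := swapL halt x y z
  have h2 := swapR halt y x z
  have e1 : aso x y z = -aso y x z := eq_neg_of_add_eq_zero_left h1
  have e2 : aso y x z = -aso y z x := eq_neg_of_add_eq_zero_left h2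
  rw [e1, e2, neg_neg]

lemma swap13 (halt : IsAlt R) (x y z : R) : aso x y z + aso z y x = 0 := by
  rw [cyc halt z y x]; exact swapL halt x y z

lemma teich (w x y z : R) :
    aso (w*x) y z - aso w (x*y) z + aso w x (y*z) = w * aso x y z + aso w x y * z := by
  simp only [aso, mul_sub, sub_mul]; abel

lemma K (halt : IsAlt R) (x y z : R) : aso y z x * x = aso x (x*y) z := by
  have t1 := teich y z x x
  have t2 := teich z x x y
  rw [aso22 halt x (y*z), aso22 halt x z, mul_zero] at t1
  rw [aso11 halt x y, aso22 halt x z, mul_zero, zero_mul] at t2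
  have c1 : aso y z (x*x) = aso z (x*x) y := by rw [cyc halt y z (x*x), cyc halt z (x*x) y]
  have c2 : aso y (z*x) x = aso (z*x) x y := cyc halt y (z*x) x
  have c3 : aso z x (x*y) = aso x (x*y) z := cyc halt z x (x*y)
  linear_combination (norm := abel) -t1 - t2 + c1 - c2 + c3

lemma Kp (halt : IsAlt R) (x y z : R) : x * aso x z y = aso (y*x) x z := by
  have t3 := teich x x z y
  have t4 := teich y x x z
  rw [aso11 halt x (z*y), aso11 halt x z, zero_mul] at t3
  rw [aso11 halt x z, aso22 halt x y, mul_zero, zero_mul] at t4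
  have c4 : aso (x*x) z y = aso y (x*x) z := by rw [cyc halt (x*x) z y, cyc halt z y (x*x)]
  have c5 : aso x (x*z) y = aso y x (x*z) := by rw [cyc halt x (x*z) y, cyc halt (x*z) y x]
  linear_combination (norm := abel) -t3 - t4 + c4 - c5

lemma moufL (halt : IsAlt R) (x y z : R) : (x*(y*x))*z = x*(y*(x*z)) := by
  refine sub_eq_zero.mp ?_
  have key : (x*(y*x))*z - x*(y*(x*z)) = aso x (y*x) z + x * aso y x z := by
    simp only [aso, mul_sub]; abel
  rw [key, cyc halt y x z, Kp halt x y z]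
  exact swapL halt x (y*x) z

lemma moufR (halt : IsAlt R) (x y z : R) : ((z*x)*y)*x = z*((x*y)*x) := by
  refine sub_eq_zero.mp ?_
  have key : ((z*x)*y)*x - z*((x*y)*x) = aso z x y * x + aso z (x*y) x := by
    simp only [aso, sub_mul]; abel
  rw [key, cyc halt z x y, cyc halt x y z, K halt x y z]
  exact swap13 halt x (x*y) z

lemma moufM (halt : IsAlt R) (x y z : R) : (x*y)*(z*x) = (x*(y*z))*x := by
  refine sub_eq_zero.mp ?_
  have key : (x*y)*(z*x) - (x*(y*z))*x = aso x y z * x - aso (x*y) z x := by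
    simp only [aso, sub_mul]; abel
  rw [key, cyc halt x y z, K halt x y z, cyc halt x (x*y) z, sub_self]

lemma E1 (halt : IsAlt R) (e x y : R) : e*(x*y) = e*x*y + x*e*y - x*(e*y) := by
  have key : e*(x*y) - (e*x*y + x*e*y - x*(e*y)) = -(aso e x y + aso x e y) := by
    simp only [aso]; abel
  rw [swapL halt e x y, neg_zero] at key
  exact sub_eq_zero.mp key

lemma E2 (halt : IsAlt R) (e x y : R) : (x*y)*e = x*(y*e) + x*(e*y) - x*e*y := by
  have key : (x*y)*e - (x*(y*e) + x*(e*y) - x*e*y) = aso x y e + aso x e y := by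
    simp only [aso]; abel
  have h := swapR halt x y e
  exact sub_eq_zero.mp (key.trans h)


section Peirce
variable (halt : IsAlt R) (e : R) (he : e*e = e)
include halt he
set_option linter.unusedSectionVars false
set_option linter.unusedTactic false

lemma z_11 {x y : R} (hx : x ∈ P11 e) (hy : e*y = 0) : x*y = 0 := by
  have h := moufL halt e x y
  rw [hx.2, hx.1, hy, mul_zero, mul_zero] at h
  exact h

lemma z_11' {x y : R} (hx : x*e = 0) (hy : y ∈ P11 e) : x*y = 0 := by
  have h := moufR halt e y x
  rw [hx, zero_mul, zero_mul, hy.1, hy.2] at h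
  exact h.symm

lemma z_2212 {x y : R} (hx : x ∈ P22 e) (hy : y ∈ P12 e) : x*y = 0 := by
  have k := K halt e x y
  rw [hx.1] at k
  have hz : aso e (0:R) y = 0 := by simp [aso]
  rw [hz] at k
  have ha : aso x y e = (x*y)*e := by simp only [aso]; rw [hy.2, mul_zero, sub_zero]
  rw [ha] at k
  have h3 := aso22 halt e (x*y)
  simp only [aso] at h3
  rw [he] at h3
  replace h3 := sub_eq_zero.mp h3
  rw [h3] at k
  have hE := E2 halt e x y
  rw [hy.2, hy.1, hx.2, mul_zero, zero_mul, k] at hE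
  simpa using hE.symm

lemma z_2122 {x y : R} (hx : x ∈ P21 e) (hy : y ∈ P22 e) : x*y = 0 := by
  have k := Kp halt e x y
  rw [hx.2] at k
  have h1 : e*(y*x) = 0 := by
    rw [E1 halt e y x, hy.1, hy.2, hx.1]; simp
  have h0 : aso e y x = 0 := by simp only [aso]; rw [hy.1, h1, zero_mul, zero_sub, neg_zero]
  rw [h0, mul_zero] at k
  have h2 : aso x e y = x*y := by
    simp only [aso]; rw [hx.2, hy.1, mul_zero, sub_zero]
  rw [h2] at k
  exact k.symm

lemma sq_12 {x : R} (hx : x ∈ P12 e) : x*x = 0 := by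
  have h2 := aso22 halt x e
  simp only [aso] at h2
  replace h2 := sub_eq_zero.mp h2
  have h3 : e*(x*x) = 0 := by
    rw [E1 halt e x x, hx.1, hx.2, zero_mul]; abel
  calc x*x = e*x*x := by rw [hx.1]
  _ = e*(x*x) := h2
  _ = 0 := h3

lemma sq_21 {x : R} (hx : x ∈ P21 e) : x*x = 0 := by
  have h2 := aso11 halt x e
  simp only [aso] at h2
  replace h2 := sub_eq_zero.mp h2
  have h3 : (x*x)*e = 0 := by
    rw [E2 halt e x x, hx.2, hx.1, mul_zero]; abel
  calc x*x = x*(x*e) := by rw [hx.2]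
  _ = x*x*e := h2.symm
  _ = 0 := h3

-- product rules by Peirce computation
lemma m1111 {x y : R} (hx : x ∈ P11 e) (hy : y ∈ P11 e) : x*y ∈ P11 e := by
  constructor
  · rw [E1 halt e x y, hx.1, hx.2, hy.1]; (try simp only [zero_mul, mul_zero]); abel
  · rw [E2 halt e x y, hy.2, hy.1, hx.2]; (try simp only [zero_mul, mul_zero]); abel

lemma m1112 {x y : R} (hx : x ∈ P11 e) (hy : y ∈ P12 e) : x*y ∈ P12 e := by
  constructor
  · rw [E1 halt e x y, hx.1, hx.2, hy.1]; (try simp only [zero_mul, mul_zero]); abel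
  · rw [E2 halt e x y, hy.2, hy.1, hx.2]; (try simp only [zero_mul, mul_zero]); abel

lemma m1211 {x y : R} (hx : x ∈ P12 e) (hy : y ∈ P11 e) : x*y = 0 :=
  z_11' halt e he hx.2 hy

lemma m1212 {x y : R} (hx : x ∈ P12 e) (hy : y ∈ P12 e) : x*y ∈ P21 e := by
  constructor
  · rw [E1 halt e x y, hx.1, hx.2, hy.1]; (try simp only [zero_mul, mul_zero]); abel
  · rw [E2 halt e x y, hy.2, hy.1, hx.2]; (try simp only [zero_mul, mul_zero]); abel

lemma m1221 {x y : R} (hx : x ∈ P12 e) (hy : y ∈ P21 e) : x*y ∈ P11 e := by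
  constructor
  · rw [E1 halt e x y, hx.1, hx.2, hy.1]; (try simp only [zero_mul, mul_zero]); abel
  · rw [E2 halt e x y, hy.2, hy.1, hx.2]; (try simp only [zero_mul, mul_zero]); abel

lemma m1222 {x y : R} (hx : x ∈ P12 e) (hy : y ∈ P22 e) : x*y ∈ P12 e := by
  constructor
  · rw [E1 halt e x y, hx.1, hx.2, hy.1]; (try simp only [zero_mul, mul_zero]); abel
  · rw [E2 halt e x y, hy.2, hy.1, hx.2]; (try simp only [zero_mul, mul_zero]); abel

lemma m2111 {x y : R} (hx : x ∈ P21 e) (hy : y ∈ P11 e) : x*y ∈ P21 e := by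
  constructor
  · rw [E1 halt e x y, hx.1, hx.2, hy.1]; (try simp only [zero_mul, mul_zero]); abel
  · rw [E2 halt e x y, hy.2, hy.1, hx.2]; (try simp only [zero_mul, mul_zero]); abel

lemma m2112 {x y : R} (hx : x ∈ P21 e) (hy : y ∈ P12 e) : x*y ∈ P22 e := by
  constructor
  · rw [E1 halt e x y, hx.1, hx.2, hy.1]; (try simp only [zero_mul, mul_zero]); abel
  · rw [E2 halt e x y, hy.2, hy.1, hx.2]; (try simp only [zero_mul, mul_zero]); abel

lemma m2121 {x y : R} (hx : x ∈ P21 e) (hy : y ∈ P21 e) : x*y ∈ P12 e := by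
  constructor
  · rw [E1 halt e x y, hx.1, hx.2, hy.1]; (try simp only [zero_mul, mul_zero]); abel
  · rw [E2 halt e x y, hy.2, hy.1, hx.2]; (try simp only [zero_mul, mul_zero]); abel

lemma m2122 {x y : R} (hx : x ∈ P21 e) (hy : y ∈ P22 e) : x*y = 0 :=
  z_2122 halt e he hx hy

lemma m2211 {x y : R} (hx : x ∈ P22 e) (hy : y ∈ P11 e) : x*y = 0 :=
  z_11' halt e he hx.2 hy

lemma m2212 {x y : R} (hx : x ∈ P22 e) (hy : y ∈ P12 e) : x*y = 0 :=
  z_2212 halt e he hx hy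

lemma m2221 {x y : R} (hx : x ∈ P22 e) (hy : y ∈ P21 e) : x*y ∈ P21 e := by
  constructor
  · rw [E1 halt e x y, hx.1, hx.2, hy.1]; (try simp only [zero_mul, mul_zero]); abel
  · rw [E2 halt e x y, hy.2, hy.1, hx.2]; (try simp only [zero_mul, mul_zero]); abel

lemma m2222 {x y : R} (hx : x ∈ P22 e) (hy : y ∈ P22 e) : x*y ∈ P22 e := by
  constructor
  · rw [E1 halt e x y, hx.1, hx.2, hy.1]; (try simp only [zero_mul, mul_zero]); abel
  · rw [E2 halt e x y, hy.2, hy.1, hx.2]; (try simp only [zero_mul, mul_zero]); abel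

lemma m1121 {x y : R} (hx : x ∈ P11 e) (hy : y ∈ P21 e) : x*y = 0 :=
  z_11 halt e he hx hy.1

lemma m1122 {x y : R} (hx : x ∈ P11 e) (hy : y ∈ P22 e) : x*y = 0 :=
  z_11 halt e he hx hy.1

end Peirce


section Peirce2
variable (halt : IsAlt R) (e : R) (he : e*e = e)
include halt he
set_option linter.unusedSectionVars false

lemma pdecomp (x : R) :
    ∃ p ∈ P11 e, ∃ q ∈ P12 e, ∃ u ∈ P21 e, ∃ v ∈ P22 e, x = p + q + u + v := by
  have I1 : ∀ w : R, e*(e*w) = e*w := by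
    intro w
    have h := aso11 halt e w
    simp only [aso] at h
    rw [he] at h
    exact (sub_eq_zero.mp h).symm
  have I2 : ∀ w : R, (w*e)*e = w*e := by
    intro w
    have h := aso22 halt e w
    simp only [aso] at h
    rw [he] at h
    exact sub_eq_zero.mp h
  have I3 : (e*x)*e = e*(x*e) := by
    have h := swapR halt e x e
    rw [aso11 halt e x] at h
    have h2 : aso e x e = 0 := by
      have := add_eq_zero_iff_eq_neg.mp h
      simpa using this
    simp only [aso] at h2
    exact sub_eq_zero.mp h2
  refine ⟨e*(x*e), ⟨?_, ?_⟩, e*x - e*(x*e), ⟨?_, ?_⟩, x*e - e*(x*e), ⟨?_, ?_⟩,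
    x - e*x - x*e + e*(x*e), ⟨?_, ?_⟩, by abel⟩
  · exact I1 (x*e)
  · rw [← I3, I2, I3]
  · rw [mul_sub, I1, I1]
  · rw [sub_mul, ← I3, I2, I3, sub_self]
  · rw [mul_sub, I1, sub_self]
  · rw [sub_mul, I2, ← I3, I2, I3]
  · rw [mul_add, mul_sub, mul_sub, I1, I1]; abel
  · rw [add_mul, sub_mul, sub_mul, I2, ← I3, I2]; abel

lemma pdirect {p q u v : R} (hp : p ∈ P11 e) (hq : q ∈ P12 e) (hu : u ∈ P21 e)
    (hv : v ∈ P22 e) (h : p + q + u + v = 0) : p = 0 ∧ q = 0 ∧ u = 0 ∧ v = 0 := by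
  have h1 : e*(p+q+u+v) = p + q := by
    rw [mul_add, mul_add, mul_add, hp.1, hq.1, hu.1, hv.1]; abel
  rw [h, mul_zero] at h1
  have h2 : (p+q+u+v)*e = p + u := by
    rw [add_mul, add_mul, add_mul, hp.2, hq.2, hu.2, hv.2]; abel
  rw [h, zero_mul] at h2
  have h3 : e*(p+u) = p := by rw [mul_add, hp.1, hu.1]; abel
  rw [← h2, mul_zero] at h3
  have hp0 : p = 0 := h3.symm
  have hq0 : q = 0 := by have := h1.symm; rw [hp0, zero_add] at this; exact this
  have hu0 : u = 0 := by have := h2.symm; rw [hp0, zero_add] at this; exact this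
  refine ⟨hp0, hq0, hu0, ?_⟩
  rw [hp0, hq0, hu0] at h; simpa using h

end Peirce2

/-- additive span -/
inductive Sp (T : R → Prop) : R → Prop
  | mem {x} : T x → Sp T x
  | zero : Sp T 0
  | add {x y} : Sp T x → Sp T y → Sp T (x + y)
  | neg {x} : Sp T x → Sp T (-x)

lemma Sp.ind {T P : R → Prop} (h0 : P 0) (hadd : ∀ {x y}, P x → P y → P (x+y))
    (hneg : ∀ {x}, P x → P (-x)) (hT : ∀ {t}, T t → P t) {x} (hx : Sp T x) : P x := by
  induction hx with
  | mem h => exact hT h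
  | zero => exact h0
  | add _ _ ih1 ih2 => exact hadd ih1 ih2
  | neg _ ih => exact hneg ih

lemma Sp.mul_zero_left {T : R → Prop} {a : R} (h : ∀ {t}, T t → a * t = 0) {x}
    (hx : Sp T x) : a * x = 0 := by
  induction hx with
  | mem ht => exact h ht
  | zero => exact mul_zero a
  | add _ _ ih1 ih2 => rw [mul_add, ih1, ih2, add_zero]
  | neg _ ih => rw [mul_neg, ih, neg_zero]

lemma Sp.mul_zero_right {T : R → Prop} {a : R} (h : ∀ {t}, T t → t * a = 0) {x}
    (hx : Sp T x) : x * a = 0 := by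
  induction hx with
  | mem ht => exact h ht
  | zero => exact zero_mul a
  | add _ _ ih1 ih2 => rw [add_mul, ih1, ih2, add_zero]
  | neg _ ih => rw [neg_mul, ih, neg_zero]

section Ann
variable (halt : IsAlt R)
include halt
set_option linter.unusedSectionVars false

lemma lann_ideal {I : Set R} (hI : IsIdealSet I) :
    IsIdealSet {x | ∀ i ∈ I, x * i = 0} := by
  refine ⟨fun i _ => zero_mul i, fun a ha b hb i hi => by rw [add_mul, ha i hi, hb i hi, add_zero],
    fun a ha i hi => by rw [neg_mul, ha i hi, neg_zero], fun r x hx => ⟨fun i hi => ?_, fun i hi => ?_⟩⟩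
  · -- (r*x)*i = 0
    have h1 : aso x r i = 0 := by
      have h2 : aso x i r = 0 := by
        simp only [aso]
        rw [hx i hi, zero_mul, hx (i*r) (hI.2.2.2 r i hi).2, sub_zero]
      have := swapR halt x r i
      rw [h2, add_zero] at this; exact this
    have key := swapL halt r x i
    rw [h1, add_zero] at key
    simp only [aso] at key
    rw [hx i hi, mul_zero, sub_zero] at key
    exact key
  · -- (x*r)*i = 0
    have h2 : aso x i r = 0 := by
      simp only [aso]
      rw [hx i hi, zero_mul, hx (i*r) (hI.2.2.2 r i hi).2, sub_zero]
    have h1 : aso x r i = 0 := by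
      have := swapR halt x r i
      rw [h2, add_zero] at this; exact this
    simp only [aso] at h1
    rw [hx (r*i) (hI.2.2.2 r i hi).1, sub_zero] at h1
    exact h1

lemma rann_ideal {I : Set R} (hI : IsIdealSet I) :
    IsIdealSet {x | ∀ i ∈ I, i * x = 0} := by
  refine ⟨fun i _ => mul_zero i, fun a ha b hb i hi => by rw [mul_add, ha i hi, hb i hi, add_zero],
    fun a ha i hi => by rw [mul_neg, ha i hi, neg_zero], fun r x hx => ⟨fun i hi => ?_, fun i hi => ?_⟩⟩
  · -- i*(r*x) = 0
    have h1 : aso i r x = 0 := by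
      have h2 : aso r i x = 0 := by
        simp only [aso]
        rw [hx (r*i) (hI.2.2.2 r i hi).1, hx i hi, mul_zero, sub_zero]
      have := swapL halt i r x
      rw [eq_neg_of_add_eq_zero_left (swapL halt r i x)] at h2
      rwa [neg_eq_zero] at h2
    simp only [aso] at h1
    rw [hx (i*r) (hI.2.2.2 r i hi).2] at h1
    have := sub_eq_zero.mp h1
    rw [this]
  · -- i*(x*r) = 0
    have h2 : aso r i x = 0 := by
      simp only [aso]
      rw [hx (r*i) (hI.2.2.2 r i hi).1, hx i hi, mul_zero, sub_zero]
    have h1 : aso i r x = 0 := by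
      rw [eq_neg_of_add_eq_zero_left (swapL halt r i x)] at h2
      rwa [neg_eq_zero] at h2
    have h3 : aso i x r = 0 := by
      have := swapR halt i x r
      rw [eq_neg_of_add_eq_zero_left (swapR halt i r x)] at h1
      rwa [neg_eq_zero] at h1
    simp only [aso] at h3
    rw [hx i hi, zero_mul, zero_sub, neg_eq_zero] at h3
    exact h3
end Ann


section Prime
variable (halt : IsAlt R) (hprime : IsPrimeRing R)
include halt hprime
set_option linter.unusedSectionVars false

lemma ne_zero_set {I : Set R} {w : R} (hw : w ∈ I) (hw0 : w ≠ 0) : I ≠ {0} := by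
  intro h; rw [h] at hw; exact hw0 hw

lemma ann_self {I : Set R} (hI : IsIdealSet I) {x : R} (hxI : x ∈ I)
    (hx : ∀ i ∈ I, x * i = 0) : x = 0 := by
  by_contra hx0
  obtain ⟨l, hl, i, hi, hne⟩ := hprime {y | ∀ i ∈ I, y * i = 0} I (lann_ideal halt hI) hI
    (ne_zero_set halt hprime hx hx0) (ne_zero_set halt hprime hxI hx0)
  exact hne (hl i hi)

lemma ann_nz_left {I : Set R} (hI : IsIdealSet I) {w : R} (hw : w ∈ I) (hw0 : w ≠ 0)
    {x : R} (hx : ∀ i ∈ I, x * i = 0) : x = 0 := by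
  by_contra hx0
  obtain ⟨l, hl, i, hi, hne⟩ := hprime {y | ∀ i ∈ I, y * i = 0} I (lann_ideal halt hI) hI
    (ne_zero_set halt hprime hx hx0) (ne_zero_set halt hprime hw hw0)
  exact hne (hl i hi)

lemma ann_nz_right {I : Set R} (hI : IsIdealSet I) {w : R} (hw : w ∈ I) (hw0 : w ≠ 0)
    {x : R} (hx : ∀ i ∈ I, i * x = 0) : x = 0 := by
  by_contra hx0
  obtain ⟨i, hi, l, hl, hne⟩ := hprime I {y | ∀ i ∈ I, i * y = 0} hI (rann_ideal halt hI)
    (ne_zero_set halt hprime hw hw0) (ne_zero_set halt hprime hx hx0)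
  exact hne (hl i hi)

end Prime

/-- An abstract Peirce context. -/
structure PCtx (R : Type*) [NonUnitalNonAssocRing R] where
  A : Set R
  B : Set R
  C : Set R
  D : Set R
  hA0 : (0:R) ∈ A
  hB0 : (0:R) ∈ B
  hC0 : (0:R) ∈ C
  hD0 : (0:R) ∈ D
  hAadd : ∀ {x y : R}, x ∈ A → y ∈ A → x + y ∈ A
  hBadd : ∀ {x y : R}, x ∈ B → y ∈ B → x + y ∈ B
  hCadd : ∀ {x y : R}, x ∈ C → y ∈ C → x + y ∈ C
  hDadd : ∀ {x y : R}, x ∈ D → y ∈ D → x + y ∈ D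
  hAneg : ∀ {x : R}, x ∈ A → -x ∈ A
  hBneg : ∀ {x : R}, x ∈ B → -x ∈ B
  hCneg : ∀ {x : R}, x ∈ C → -x ∈ C
  hDneg : ∀ {x : R}, x ∈ D → -x ∈ D
  mAA : ∀ {x y : R}, x ∈ A → y ∈ A → x*y ∈ A
  mAB : ∀ {x y : R}, x ∈ A → y ∈ B → x*y ∈ B
  mAC : ∀ {x y : R}, x ∈ A → y ∈ C → x*y = 0
  mAD : ∀ {x y : R}, x ∈ A → y ∈ D → x*y = 0
  mBA : ∀ {x y : R}, x ∈ B → y ∈ A → x*y = 0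
  mBB : ∀ {x y : R}, x ∈ B → y ∈ B → x*y ∈ C
  mBC : ∀ {x y : R}, x ∈ B → y ∈ C → x*y ∈ A
  mBD : ∀ {x y : R}, x ∈ B → y ∈ D → x*y ∈ B
  mCA : ∀ {x y : R}, x ∈ C → y ∈ A → x*y ∈ C
  mCB : ∀ {x y : R}, x ∈ C → y ∈ B → x*y ∈ D
  mCC : ∀ {x y : R}, x ∈ C → y ∈ C → x*y ∈ B
  mCD : ∀ {x y : R}, x ∈ C → y ∈ D → x*y = 0
  mDA : ∀ {x y : R}, x ∈ D → y ∈ A → x*y = 0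
  mDB : ∀ {x y : R}, x ∈ D → y ∈ B → x*y = 0
  mDC : ∀ {x y : R}, x ∈ D → y ∈ C → x*y ∈ C
  mDD : ∀ {x y : R}, x ∈ D → y ∈ D → x*y ∈ D
  sqB : ∀ {x : R}, x ∈ B → x*x = 0
  sqC : ∀ {x : R}, x ∈ C → x*x = 0
  decomp : ∀ x : R, ∃ p ∈ A, ∃ q ∈ B, ∃ u ∈ C, ∃ v ∈ D, x = p + q + u + v
  direct : ∀ {p q u v : R}, p ∈ A → q ∈ B → u ∈ C → v ∈ D → p + q + u + v = 0 →
    p = 0 ∧ q = 0 ∧ u = 0 ∧ v = 0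

namespace PCtx
variable {c : PCtx R}

lemma antiB {u v : R} (hu : u ∈ c.B) (hv : v ∈ c.B) : u*v = -(v*u) := by
  have h := c.sqB (c.hBadd hu hv)
  rw [add_mul, mul_add, mul_add, c.sqB hu, c.sqB hv] at h
  have : u*v + v*u = 0 := by
    have := h; abel_nf at this ⊢; convert this using 2 <;> abel
  exact eq_neg_of_add_eq_zero_left this

lemma antiC {u v : R} (hu : u ∈ c.C) (hv : v ∈ c.C) : u*v = -(v*u) := by
  have h := c.sqC (c.hCadd hu hv)
  rw [add_mul, mul_add, mul_add, c.sqC hu, c.sqC hv] at h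
  have : u*v + v*u = 0 := by
    have := h; abel_nf at this ⊢; convert this using 2 <;> abel
  exact eq_neg_of_add_eq_zero_left this

end PCtx


namespace PCtx
variable (halt : IsAlt R)

def Wgen (c : PCtx R) : R → Prop := fun z => ∃ p ∈ c.B, ∃ q ∈ c.C, z = p*q

def Wset (c : PCtx R) : Set R :=
  {x | ∃ b ∈ c.B, ∃ u ∈ c.C, ∃ d ∈ c.D, ∃ m, Sp (Wgen c) m ∧ x = b + u + d + m}

variable {c : PCtx R}

lemma Wgen_memA {z : R} (hz : Wgen c z) : z ∈ c.A := by
  obtain ⟨p, hp, q, hq, rfl⟩ := hz; exact c.mBC hp hq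

lemma W_memB {b : R} (hb : b ∈ c.B) : b ∈ Wset c :=
  ⟨b, hb, 0, c.hC0, 0, c.hD0, 0, Sp.zero, by simp⟩

lemma W_memC {u : R} (hu : u ∈ c.C) : u ∈ Wset c :=
  ⟨0, c.hB0, u, hu, 0, c.hD0, 0, Sp.zero, by simp⟩

lemma W_memD {d : R} (hd : d ∈ c.D) : d ∈ Wset c :=
  ⟨0, c.hB0, 0, c.hC0, d, hd, 0, Sp.zero, by simp⟩

lemma W_memSp {m : R} (hm : Sp (Wgen c) m) : m ∈ Wset c :=
  ⟨0, c.hB0, 0, c.hC0, 0, c.hD0, m, hm, by simp⟩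

lemma W_zero : (0:R) ∈ Wset c := W_memB c.hB0

lemma W_add {x y : R} (hx : x ∈ Wset c) (hy : y ∈ Wset c) : x + y ∈ Wset c := by
  obtain ⟨b, hb, u, hu, d, hd, m, hm, rfl⟩ := hx
  obtain ⟨b', hb', u', hu', d', hd', m', hm', rfl⟩ := hy
  exact ⟨b+b', c.hBadd hb hb', u+u', c.hCadd hu hu', d+d', c.hDadd hd hd',
    m+m', Sp.add hm hm', by abel⟩

lemma W_neg {x : R} (hx : x ∈ Wset c) : -x ∈ Wset c := by
  obtain ⟨b, hb, u, hu, d, hd, m, hm, rfl⟩ := hx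
  exact ⟨-b, c.hBneg hb, -u, c.hCneg hu, -d, c.hDneg hd, -m, Sp.neg hm, by abel⟩

lemma W_spind {p : R} (hgenL : ∀ {t : R}, Wgen c t → p*t ∈ Wset c) {m : R}
    (hm : Sp (Wgen c) m) : p*m ∈ Wset c := by
  refine Sp.ind (T := Wgen c) (P := fun m => p*m ∈ Wset c) ?_ ?_ ?_ ?_ hm
  · show p*0 ∈ Wset c; rw [mul_zero]; exact W_zero
  · intro x y h1 h2; rw [mul_add]; exact W_add h1 h2
  · intro x h1; rw [mul_neg]; exact W_neg h1
  · intro t ht; exact hgenL ht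

lemma W_spind' {p : R} (hgenR : ∀ {t : R}, Wgen c t → t*p ∈ Wset c) {m : R}
    (hm : Sp (Wgen c) m) : m*p ∈ Wset c := by
  refine Sp.ind (T := Wgen c) (P := fun m => m*p ∈ Wset c) ?_ ?_ ?_ ?_ hm
  · show (0:R)*p ∈ Wset c; rw [zero_mul]; exact W_zero
  · intro x y h1 h2; rw [add_mul]; exact W_add h1 h2
  · intro x h1; rw [neg_mul]; exact W_neg h1
  · intro t ht; exact hgenR ht

section withhalt
include halt
set_option linter.unusedSectionVars false

lemma iW0 {h u v : R} (hu : u ∈ c.B) (hh : h ∈ c.A) (hv : v ∈ c.C) : aso u h v = 0 := by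
  simp only [aso]
  rw [c.mBA hu hh, c.mAC hh hv, zero_mul, mul_zero, sub_zero]

lemma iW1 {h u v : R} (hh : h ∈ c.A) (hu : u ∈ c.B) (hv : v ∈ c.C) : h*(u*v) = h*u*v := by
  have h2 := swapL halt h u v
  rw [iW0 halt hu hh hv, add_zero] at h2
  simp only [aso] at h2
  exact (sub_eq_zero.mp h2).symm

lemma iW2 {h u v : R} (hh : h ∈ c.A) (hu : u ∈ c.B) (hv : v ∈ c.C) : (u*v)*h = u*(v*h) := by
  have h2 := swapR halt u v h
  rw [iW0 halt hu hh hv, add_zero] at h2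
  simp only [aso] at h2
  exact sub_eq_zero.mp h2

lemma mulW_A {p x : R} (hp : p ∈ c.A) (hx : x ∈ Wset c) : p*x ∈ Wset c ∧ x*p ∈ Wset c := by
  obtain ⟨b, hb, u, hu, d, hd, m, hm, rfl⟩ := hx
  constructor
  · rw [mul_add, mul_add, mul_add]
    refine W_add (W_add (W_add ?_ ?_) ?_) ?_
    · exact W_memB (c.mAB hp hb)
    · rw [c.mAC hp hu]; exact W_zero
    · rw [c.mAD hp hd]; exact W_zero
    · refine W_spind ?_ hm
      rintro t ⟨b', hb', q', hq', rfl⟩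
      rw [iW1 halt hp hb' hq']
      exact W_memSp (Sp.mem ⟨p*b', c.mAB hp hb', q', hq', rfl⟩)
  · rw [add_mul, add_mul, add_mul]
    refine W_add (W_add (W_add ?_ ?_) ?_) ?_
    · rw [c.mBA hb hp]; exact W_zero
    · exact W_memC (c.mCA hu hp)
    · rw [c.mDA hd hp]; exact W_zero
    · refine W_spind' ?_ hm
      rintro t ⟨b', hb', q', hq', rfl⟩
      rw [iW2 halt hp hb' hq']
      exact W_memSp (Sp.mem ⟨b', hb', q'*p, c.mCA hq' hp, rfl⟩)

lemma mulW_B {p x : R} (hp : p ∈ c.B) (hx : x ∈ Wset c) : p*x ∈ Wset c ∧ x*p ∈ Wset c := by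
  obtain ⟨b, hb, u, hu, d, hd, m, hm, rfl⟩ := hx
  constructor
  · rw [mul_add, mul_add, mul_add]
    refine W_add (W_add (W_add ?_ ?_) ?_) ?_
    · exact W_memC (c.mBB hp hb)
    · exact W_memSp (Sp.mem ⟨p, hp, u, hu, rfl⟩)
    · exact W_memB (c.mBD hp hd)
    · refine W_spind ?_ hm
      intro t ht
      rw [c.mBA hp (Wgen_memA ht)]; exact W_zero
  · rw [add_mul, add_mul, add_mul]
    refine W_add (W_add (W_add ?_ ?_) ?_) ?_
    · exact W_memC (c.mBB hb hp)
    · exact W_memD (c.mCB hu hp)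
    · rw [c.mDB hd hp]; exact W_zero
    · refine W_spind' ?_ hm
      intro t ht
      exact W_memB (c.mAB (Wgen_memA ht) hp)

lemma mulW_C {p x : R} (hp : p ∈ c.C) (hx : x ∈ Wset c) : p*x ∈ Wset c ∧ x*p ∈ Wset c := by
  obtain ⟨b, hb, u, hu, d, hd, m, hm, rfl⟩ := hx
  constructor
  · rw [mul_add, mul_add, mul_add]
    refine W_add (W_add (W_add ?_ ?_) ?_) ?_
    · exact W_memD (c.mCB hp hb)
    · exact W_memB (c.mCC hp hu)
    · rw [c.mCD hp hd]; exact W_zero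
    · refine W_spind ?_ hm
      intro t ht
      exact W_memC (c.mCA hp (Wgen_memA ht))
  · rw [add_mul, add_mul, add_mul]
    refine W_add (W_add (W_add ?_ ?_) ?_) ?_
    · exact W_memSp (Sp.mem ⟨b, hb, p, hp, rfl⟩)
    · exact W_memB (c.mCC hu hp)
    · exact W_memC (c.mDC hd hp)
    · refine W_spind' ?_ hm
      intro t ht
      rw [c.mAC (Wgen_memA ht) hp]; exact W_zero

lemma mulW_D {p x : R} (hp : p ∈ c.D) (hx : x ∈ Wset c) : p*x ∈ Wset c ∧ x*p ∈ Wset c := by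
  obtain ⟨b, hb, u, hu, d, hd, m, hm, rfl⟩ := hx
  constructor
  · rw [mul_add, mul_add, mul_add]
    refine W_add (W_add (W_add ?_ ?_) ?_) ?_
    · rw [c.mDB hp hb]; exact W_zero
    · exact W_memC (c.mDC hp hu)
    · exact W_memD (c.mDD hp hd)
    · refine W_spind ?_ hm
      intro t ht
      rw [c.mDA hp (Wgen_memA ht)]; exact W_zero
  · rw [add_mul, add_mul, add_mul]
    refine W_add (W_add (W_add ?_ ?_) ?_) ?_
    · exact W_memB (c.mBD hb hp)
    · rw [c.mCD hu hp]; exact W_zero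
    · exact W_memD (c.mDD hd hp)
    · refine W_spind' ?_ hm
      intro t ht
      rw [c.mAD (Wgen_memA ht) hp]; exact W_zero

lemma W_ideal : IsIdealSet (Wset c) := by
  refine ⟨W_zero, fun a ha b hb => W_add ha hb, fun a ha => W_neg ha, fun r x hx => ?_⟩
  obtain ⟨p, hpA, q, hqB, u, huC, v, hvD, rfl⟩ := c.decomp r
  constructor
  · rw [add_mul, add_mul, add_mul]
    exact W_add (W_add (W_add (mulW_A halt hpA hx).1 (mulW_B halt hqB hx).1)
      (mulW_C halt huC hx).1) (mulW_D halt hvD hx).1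
  · rw [mul_add, mul_add, mul_add]
    exact W_add (W_add (W_add (mulW_A halt hpA hx).2 (mulW_B halt hqB hx).2)
      (mulW_C halt huC hx).2) (mulW_D halt hvD hx).2

end withhalt
end PCtx


namespace PCtx
variable {c : PCtx R} (halt : IsAlt R) (hprime : IsPrimeRing R)
include halt
set_option linter.unusedSectionVars false

lemma iW3 {x b' q' : R} (hxA : x ∈ c.A) (hb' : b' ∈ c.B) (hq' : q' ∈ c.C)
    (hq'x : q'*x = 0) : (b'*q')*x = 0 := by
  have h1 : aso q' b' x = 0 := by
    simp only [aso]
    rw [c.mDA (c.mCB hq' hb') hxA, c.mBA hb' hxA, mul_zero, sub_zero]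
  have h2 := swapL halt b' q' x
  rw [h1, add_zero] at h2
  simp only [aso] at h2
  rw [hq'x, mul_zero, sub_zero] at h2
  exact h2

include hprime

theorem pc2 (hnz : ∃ t : R, (t ∈ c.B ∨ t ∈ c.C) ∧ t ≠ 0) :
    ∀ x ∈ c.A, (∀ y ∈ c.B, x*y = 0) → x = 0 := by
  intro x hxA hxB
  obtain ⟨t, ht, ht0⟩ := hnz
  have htW : t ∈ Wset c := by
    rcases ht with h | h
    · exact W_memB h
    · exact W_memC h
  refine ann_nz_left halt hprime (W_ideal halt) htW ht0 ?_
  intro i hi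
  obtain ⟨b, hb, u, hu, d, hd, m, hm, rfl⟩ := hi
  rw [mul_add, mul_add, mul_add, hxB b hb, c.mAC hxA hu, c.mAD hxA hd]
  have hmz : x*m = 0 := by
    refine Sp.mul_zero_left ?_ hm
    rintro t' ⟨b', hb', q', hq', rfl⟩
    rw [iW1 halt hxA hb' hq', hxB b' hb', zero_mul]
  rw [hmz]; simp

theorem pc3 (hnz : ∃ t : R, (t ∈ c.B ∨ t ∈ c.C) ∧ t ≠ 0) :
    ∀ x ∈ c.A, (∀ y ∈ c.C, y*x = 0) → x = 0 := by
  intro x hxA hxC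
  obtain ⟨t, ht, ht0⟩ := hnz
  have htW : t ∈ Wset c := by
    rcases ht with h | h
    · exact W_memB h
    · exact W_memC h
  refine ann_nz_right halt hprime (W_ideal halt) htW ht0 ?_
  intro i hi
  obtain ⟨b, hb, u, hu, d, hd, m, hm, rfl⟩ := hi
  rw [add_mul, add_mul, add_mul, c.mBA hb hxA, hxC u hu, c.mDA hd hxA]
  have hmz : m*x = 0 := by
    refine Sp.mul_zero_right ?_ hm
    rintro t' ⟨b', hb', q', hq', rfl⟩
    exact iW3 halt hxA hb' hq' (hxC q' hq')
  rw [hmz]; simp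

end PCtx


namespace PCtx

inductive SG (c : PCtx R) (a : R) : R → Prop
  | base : SG c a a
  | stepA {s h : R} : h ∈ c.A → SG c a s → SG c a (h*s)
  | stepD {s r : R} : r ∈ c.D → SG c a s → SG c a (s*r)

inductive QG (c : PCtx R) (a : R) : R → Prop
  | gen1 {y : R} : y ∈ c.C → QG c a (y*a)
  | gen2 {v w : R} : v ∈ c.B → w ∈ c.B → QG c a ((a*v)*w)
  | stepL {q r : R} : r ∈ c.D → QG c a q → QG c a (r*q)
  | stepR {q r : R} : r ∈ c.D → QG c a q → QG c a (q*r)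

variable {c : PCtx R} (halt : IsAlt R)

section gi
include halt
set_option linter.unusedSectionVars false

lemma gi1 {h s v : R} (hh : h ∈ c.A) (hs : s ∈ c.B) (hv : v ∈ c.B) :
    (h*s)*v = s*(h*v) := by
  have h1 := swapL halt h s v
  simp only [aso] at h1
  rw [c.mAC hh (c.mBB hs hv), c.mBA hs hh, zero_mul] at h1
  linear_combination (norm := abel) h1

lemma gi2 {s v r : R} (hs : s ∈ c.B) (hv : v ∈ c.B) (hr : r ∈ c.D) :
    (s*r)*v = s*(v*r) := by
  have h1 := swapR halt s r v
  simp only [aso] at h1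
  rw [c.mDB hr hv, mul_zero, c.mCD (c.mBB hs hv) hr] at h1
  linear_combination (norm := abel) h1

lemma gi3 {s v r : R} (hr : r ∈ c.D) (hs : s ∈ c.B) (hv : v ∈ c.B) :
    r*(s*v) = (s*r)*v := by
  have h1 := swapL halt r s v
  simp only [aso] at h1
  rw [c.mDB hr hs, zero_mul, c.mDB hr hv, mul_zero] at h1
  linear_combination (norm := abel) -h1

lemma gi4 {p w r : R} (hr : r ∈ c.D) (hp : p ∈ c.C) (hw : w ∈ c.B) :
    r*(p*w) = (r*p)*w := by
  have h1 := swapL halt r p w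
  simp only [aso] at h1
  rw [c.mCD hp hr, zero_mul, c.mDB hr hw, mul_zero] at h1
  linear_combination (norm := abel) -h1

lemma gi5 {y h s : R} (hy : y ∈ c.C) (hh : h ∈ c.A) (hs : s ∈ c.B) :
    y*(h*s) = (y*h)*s := by
  have h1 := swapL halt y h s
  simp only [aso] at h1
  rw [c.mAC hh hy, zero_mul, c.mAD hh (c.mCB hy hs)] at h1
  linear_combination (norm := abel) -h1

lemma gi6 {y s r : R} (hy : y ∈ c.C) (hr : r ∈ c.D) (hsy : s*y = 0) :
    y*(s*r) = (y*s)*r := by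
  have h1 := swapL halt y s r
  simp only [aso] at h1
  rw [hsy, zero_mul, c.mCD hy hr, mul_zero] at h1
  linear_combination (norm := abel) -h1

lemma giQ1 {h s q : R} (hh : h ∈ c.A) (hs : s ∈ c.B) (hq : q ∈ c.D) :
    (h*s)*q = h*(s*q) := by
  have h1 := swapL halt h s q
  simp only [aso] at h1
  rw [c.mBA hs hh, zero_mul, c.mAD hh hq, mul_zero] at h1
  linear_combination (norm := abel) h1

lemma giQ2 {s x y : R} (hs : s ∈ c.B) (hx : x ∈ c.D) (hy : y ∈ c.D) :
    (s*x)*y = s*(x*y) := by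
  have h1 := cyc halt s x y
  have h2 : aso x y s = 0 := by
    simp only [aso]
    rw [c.mDB (c.mDD hx hy) hs, c.mDB hy hs, mul_zero, sub_zero]
  rw [h2] at h1
  simp only [aso] at h1
  exact sub_eq_zero.mp h1

end gi

section pc1sec
variable {a : R} (haB : a ∈ c.B) (haC : ∀ y ∈ c.C, a*y = 0)
include halt haB haC
set_option linter.unusedSectionVars false

lemma gS_B : ∀ {s : R}, SG c a s → s ∈ c.B := by
  intro s hs
  induction hs with
  | base => exact haB
  | stepA hh _ ih => exact c.mAB hh ih
  | stepD hr _ ih => exact c.mBD ih hr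

lemma gQ_D : ∀ {q : R}, QG c a q → q ∈ c.D := by
  intro q hq
  induction hq with
  | gen1 hy => exact c.mCB hy haB
  | gen2 hv hw => exact c.mCB (c.mBB haB hv) hw
  | stepL hr _ ih => exact c.mDD hr ih
  | stepR hr _ ih => exact c.mDD ih hr

lemma gK2 : ∀ {s : R}, SG c a s → ∀ y ∈ c.C, s*y = 0 := by
  intro s hs
  induction hs with
  | base => exact haC
  | @stepA s' h hh hs' ih =>
    intro y hy
    have h1 := swapL halt h s' y
    simp only [aso] at h1
    rw [c.mBA (gS_B halt haB haC hs') hh, zero_mul, c.mAC hh hy, mul_zero,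
      ih y hy, mul_zero] at h1
    linear_combination (norm := abel) h1
  | @stepD s' r hr hs' ih =>
    intro y hy
    have h1 := swapL halt s' r y
    simp only [aso] at h1
    rw [c.mDB hr (gS_B halt haB haC hs'), zero_mul, ih y hy, mul_zero,
      ih (r*y) (c.mDC hr hy)] at h1
    linear_combination (norm := abel) h1

lemma gL1 : ∀ {s : R}, SG c a s → s*a = 0 := by
  intro s hs
  induction hs with
  | base => exact c.sqB haB
  | @stepA s' h hh hs' ih =>
    have h1 := cyc halt h s' a
    simp only [aso] at h1
    rw [ih, zero_mul, c.mBA haB hh, mul_zero, mul_zero] at h1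
    linear_combination (norm := abel) h1
  | @stepD s' r hr hs' ih =>
    have has' : a*s' = 0 := by
      rw [antiB haB (gS_B halt haB haC hs'), ih, neg_zero]
    have h1 := cyc halt s' r a
    simp only [aso] at h1
    rw [c.mDB hr haB, zero_mul, has', mul_zero, mul_zero] at h1
    linear_combination (norm := abel) h1

lemma gL2 : ∀ {t : R}, SG c a t → ∀ {s : R}, SG c a s → s*t = 0 := by
  intro t ht
  induction ht with
  | base => intro s hs; exact gL1 halt haB haC hs
  | @stepA t' h hh ht' ih =>
    intro s hs
    have h1 := swapL halt s h t'
    simp only [aso] at h1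
    rw [c.mBA (gS_B halt haB haC hs) hh, zero_mul, ih (SG.stepA hh hs), ih hs,
      mul_zero] at h1
    linear_combination (norm := abel) -h1
  | @stepD t' r hr ht' ih =>
    intro s hs
    have h1 := swapR halt s t' r
    simp only [aso] at h1
    rw [ih hs, zero_mul, ih (SG.stepD hr hs), c.mDB hr (gS_B halt haB haC ht'),
      mul_zero] at h1
    linear_combination (norm := abel) -h1

lemma gSV : ∀ {s : R}, SG c a s → ∀ v ∈ c.B, ∃ v' ∈ c.B, s*v = a*v' := by
  intro s hs
  induction hs with
  | base => exact fun v hv => ⟨v, hv, rfl⟩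
  | @stepA s' h hh hs' ih =>
    intro v hv
    obtain ⟨v', hv', hev⟩ := ih (h*v) (c.mAB hh hv)
    exact ⟨v', hv', by rw [gi1 halt hh (gS_B halt haB haC hs') hv, hev]⟩
  | @stepD s' r hr hs' ih =>
    intro v hv
    obtain ⟨v', hv', hev⟩ := ih (v*r) (c.mBD hv hr)
    exact ⟨v', hv', by rw [gi2 halt (gS_B halt haB haC hs') hv hr, hev]⟩

lemma gP3 : ∀ u ∈ c.B, ∀ v ∈ c.B, u*(a*v) = 0 := by
  intro u hu v hv
  have h1 := swapL halt a u v
  simp only [aso] at h1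
  rw [haC (u*v) (c.mBB hu hv)] at h1
  have key : -(u*(a*v)) + 0 + 0 + (a*u*v + u*a*v) = 0 := by
    linear_combination (norm := abel) h1
  have hd := c.direct (c.hAneg (c.mBC hu (c.mBB haB hv))) c.hB0 c.hC0
    (c.hDadd (c.mCB (c.mBB haB hu) hv) (c.mCB (c.mBB hu haB) hv)) key
  have := hd.1
  rwa [neg_eq_zero] at this

lemma gi9 : ∀ v ∈ c.B, ∀ y ∈ c.C, (a*v)*y = a*(y*v) := by
  intro v hv y hy
  have h1 := swapR halt a v y
  simp only [aso] at h1
  rw [c.mBA haB (c.mBC hv hy), haC y hy, zero_mul] at h1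
  linear_combination (norm := abel) h1

lemma gi10 : ∀ v ∈ c.B, ∀ h ∈ c.A, (a*v)*h = a*(h*v) := by
  intro v hv h hh
  have h1 := swapR halt a v h
  simp only [aso] at h1
  rw [c.mBA hv hh, mul_zero, c.mBA haB hh, zero_mul] at h1
  linear_combination (norm := abel) h1

lemma gi3' : ∀ v ∈ c.B, ∀ r ∈ c.D, r*(a*v) = a*(v*r) := by
  intro v hv r hr
  rw [gi3 halt hr haB hv, gi2 halt haB hv hr]

lemma gM1 : ∀ v ∈ c.B, ∀ w ∈ c.B, a*((a*v)*w) = 0 := by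
  intro v hv w hw
  have step1 : a*((a*v)*w) = -((a*v)*(a*w)) := by
    have h1 := swapL halt a (a*v) w
    simp only [aso] at h1
    rw [haC (a*v) (c.mBB haB hv), zero_mul,
      c.mDB (c.mCB (c.mBB haB hv) haB) hw] at h1
    linear_combination (norm := abel) -h1
  have step3 : (a*v)*(w*a) = 0 := by
    rw [moufM halt a v w, haC (v*w) (c.mBB hv hw), zero_mul]
  rw [step1, antiB haB hw, mul_neg, step3, neg_zero, neg_zero]

end pc1sec


section pc1sec2
variable {c : PCtx R} (halt : IsAlt R) {a : R} (haB : a ∈ c.B) (haC : ∀ y ∈ c.C, a*y = 0)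
include halt haB haC
set_option linter.unusedSectionVars false

lemma gSq2 : ∀ {s : R}, SG c a s → ∀ v ∈ c.B, ∀ w ∈ c.B, s*((a*v)*w) = 0 := by
  intro s hs
  induction hs with
  | base => exact fun v hv w hw => gM1 halt haB haC v hv w hw
  | @stepA s' h hh hs' ih =>
    intro v hv w hw
    rw [giQ1 halt hh (gS_B halt haB haC hs') (c.mCB (c.mBB haB hv) hw),
      ih v hv w hw, mul_zero]
  | @stepD s' r hr hs' ih =>
    intro v hv w hw
    rw [giQ2 halt (gS_B halt haB haC hs') hr (c.mCB (c.mBB haB hv) hw),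
      gi4 halt hr (c.mBB haB hv) hw, gi3' halt haB haC v hv r hr]
    exact ih (v*r) (c.mBD hv hr) w hw

lemma gSQ0 : ∀ {q : R}, QG c a q → ∀ {s : R}, SG c a s → s*q = 0 := by
  intro q hq
  induction hq with
  | @gen1 y hy =>
    intro s hs
    have h1 := swapL halt s y a
    simp only [aso] at h1
    rw [gK2 halt haB haC hs y hy, zero_mul, gL1 halt haB haC hs, mul_zero,
      c.mDB (c.mCB hy (gS_B halt haB haC hs)) haB] at h1
    linear_combination (norm := abel) -h1
  | @gen2 v w hv hw =>
    intro s hs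
    exact gSq2 halt haB haC hs v hv w hw
  | @stepL q' r hr hq' ih =>
    intro s hs
    rw [← giQ2 halt (gS_B halt haB haC hs) hr (gQ_D halt haB haC hq')]
    exact ih (SG.stepD hr hs)
  | @stepR q' r hr hq' ih =>
    intro s hs
    rw [← giQ2 halt (gS_B halt haB haC hs) (gQ_D halt haB haC hq') hr, ih hs, zero_mul]

lemma gySQ : ∀ {s : R}, SG c a s → ∀ y ∈ c.C, QG c a (y*s) := by
  intro s hs
  induction hs with
  | base => exact fun y hy => QG.gen1 hy
  | @stepA s' h hh hs' ih =>
    intro y hy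
    rw [gi5 halt hy hh (gS_B halt haB haC hs')]
    exact ih (y*h) (c.mCA hy hh)
  | @stepD s' r hr hs' ih =>
    intro y hy
    rw [gi6 halt hy hr (gK2 halt haB haC hs' y hy)]
    exact QG.stepR hr (ih y hy)

lemma SpS_mulA {h m : R} (hh : h ∈ c.A) (hm : Sp (SG c a) m) : Sp (SG c a) (h*m) := by
  induction hm with
  | mem ht => exact Sp.mem (SG.stepA hh ht)
  | zero => rw [mul_zero]; exact Sp.zero
  | add _ _ ih1 ih2 => rw [mul_add]; exact Sp.add ih1 ih2
  | neg _ ih => rw [mul_neg]; exact Sp.neg ih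

lemma SpS_mulD {r m : R} (hr : r ∈ c.D) (hm : Sp (SG c a) m) : Sp (SG c a) (m*r) := by
  induction hm with
  | mem ht => exact Sp.mem (SG.stepD hr ht)
  | zero => rw [zero_mul]; exact Sp.zero
  | add _ _ ih1 ih2 => rw [add_mul]; exact Sp.add ih1 ih2
  | neg _ ih => rw [neg_mul]; exact Sp.neg ih

lemma gQB : ∀ {q : R}, QG c a q → ∀ w ∈ c.B, Sp (SG c a) (w*q) := by
  intro q hq
  induction hq with
  | @gen1 y hy =>
    intro w hw
    have h1 := swapR halt w y a
    simp only [aso] at h1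
    rw [haC y hy, mul_zero] at h1
    have key : w*(y*a) = (w*y)*a + (w*a)*y := by
      linear_combination (norm := abel) -h1
    rw [key, antiB hw haB, neg_mul, gi9 halt haB haC w hw y hy]
    exact Sp.add (Sp.mem (SG.stepA (c.mBC hw hy) SG.base))
      (Sp.neg (Sp.mem (SG.stepD (c.mCB hy hw) SG.base)))
  | @gen2 v w1 hv hw1 =>
    intro w hw
    have h1 := swapL halt w (a*v) w1
    simp only [aso] at h1
    rw [gP3 halt haB haC w hw v hv, zero_mul,
      c.mDB (c.mCB (c.mBB haB hv) hw) hw1] at h1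
    have key : w*((a*v)*w1) = -((a*v)*(w*w1)) := by
      linear_combination (norm := abel) -h1
    rw [key, gi9 halt haB haC v hv (w*w1) (c.mBB hw hw1)]
    exact Sp.neg (Sp.mem (SG.stepD (c.mCB (c.mBB hw hw1) hv) SG.base))
  | @stepL q' r hr hq' ih =>
    intro w hw
    have hz : r*(w*q') = 0 :=
      Sp.mul_zero_left (fun ht => c.mDB hr (gS_B halt haB haC ht)) (ih w hw)
    have h1 := swapL halt w r q'
    simp only [aso] at h1
    rw [c.mDB hr hw, zero_mul, hz] at h1
    have key : w*(r*q') = (w*r)*q' := by linear_combination (norm := abel) -h1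
    rw [key]
    exact ih (w*r) (c.mBD hw hr)
  | @stepR q' r hr hq' ih =>
    intro w hw
    have h2 : aso q' r w = 0 := by
      simp only [aso]
      rw [c.mDB (c.mDD (gQ_D halt haB haC hq') hr) hw, c.mDB hr hw, mul_zero, sub_zero]
    have h1 := cyc halt w q' r
    rw [h2] at h1
    simp only [aso] at h1
    rw [← sub_eq_zero.mp h1]
    exact SpS_mulD halt haB haC hr (ih w hw)

lemma gQC : ∀ {q : R}, QG c a q → ∀ y ∈ c.C, ∃ v' ∈ c.B, q*y = a*v' := by
  intro q hq
  induction hq with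
  | @gen1 z hz =>
    intro y hy
    have h1 := swapL halt z a y
    simp only [aso] at h1
    rw [haC y hy, mul_zero, haC z hz, zero_mul] at h1
    exact ⟨z*y, c.mCC hz hy, by linear_combination (norm := abel) h1⟩
  | @gen2 v w hv hw =>
    intro y hy
    have h1 := swapL halt (a*v) w y
    simp only [aso] at h1
    rw [gP3 halt haB haC w hw v hv, zero_mul] at h1
    have hs0 : SG c a (a*(y*v)) := SG.stepD (c.mCB hy hv) SG.base
    obtain ⟨v2, hv2, hev2⟩ := gSV halt haB haC hs0 w hw
    have key : ((a*v)*w)*y = (a*v)*(w*y) + w*((a*v)*y) := by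
      linear_combination (norm := abel) h1
    rw [key, gi10 halt haB haC v hv (w*y) (c.mBC hw hy),
      gi9 halt haB haC v hv y hy,
      antiB hw (gS_B halt haB haC hs0), hev2]
    exact ⟨(w*y)*v + -v2, c.hBadd (c.mAB (c.mBC hw hy) hv) (c.hBneg hv2),
      by rw [mul_add, mul_neg]⟩
  | @stepL q' r hr hq' ih =>
    intro y hy
    obtain ⟨v', hv', hev⟩ := ih y hy
    have h2 : aso q' y r = 0 := by
      simp only [aso]
      rw [hev, c.mCD (c.mBB haB hv') hr, c.mCD hy hr, mul_zero, sub_zero]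
    have h1 := cyc halt r q' y
    rw [h2] at h1
    simp only [aso] at h1
    rw [sub_eq_zero.mp h1, hev, gi3' halt haB haC v' hv' r hr]
    exact ⟨v'*r, c.mBD hv' hr, rfl⟩
  | @stepR q' r hr hq' ih =>
    intro y hy
    obtain ⟨v', hv', hev⟩ := ih y hy
    have h2 : aso q' y r = 0 := by
      simp only [aso]
      rw [hev, c.mCD (c.mBB haB hv') hr, c.mCD hy hr, mul_zero, sub_zero]
    have h3 := swapR halt q' r y
    rw [h2, add_zero] at h3
    simp only [aso] at h3
    rw [sub_eq_zero.mp h3]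
    exact ih (r*y) (c.mDC hr hy)

end pc1sec2


def Iset (c : PCtx R) (a : R) : Set R :=
  {x | ∃ s, Sp (SG c a) s ∧ ∃ v ∈ c.B, ∃ q, Sp (QG c a) q ∧ x = s + a*v + q}

section pc1sec3
variable {c : PCtx R} (halt : IsAlt R) {a : R} (haB : a ∈ c.B) (haC : ∀ y ∈ c.C, a*y = 0)
include halt haB haC
set_option linter.unusedSectionVars false

lemma I_memS {s : R} (hs : Sp (SG c a) s) : s ∈ Iset c a :=
  ⟨s, hs, 0, c.hB0, 0, Sp.zero, by simp⟩

lemma I_memP {v : R} (hv : v ∈ c.B) : a*v ∈ Iset c a :=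
  ⟨0, Sp.zero, v, hv, 0, Sp.zero, by simp⟩

lemma I_memQ {q : R} (hq : Sp (QG c a) q) : q ∈ Iset c a :=
  ⟨0, Sp.zero, 0, c.hB0, q, hq, by simp⟩

lemma I_zero : (0:R) ∈ Iset c a := I_memS halt haB haC Sp.zero

lemma I_add {x y : R} (hx : x ∈ Iset c a) (hy : y ∈ Iset c a) : x + y ∈ Iset c a := by
  obtain ⟨s, hs, v, hv, q, hq, rfl⟩ := hx
  obtain ⟨s', hs', v', hv', q', hq', rfl⟩ := hy
  exact ⟨s+s', Sp.add hs hs', v+v', c.hBadd hv hv', q+q', Sp.add hq hq',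
    by rw [mul_add]; abel⟩

lemma I_neg {x : R} (hx : x ∈ Iset c a) : -x ∈ Iset c a := by
  obtain ⟨s, hs, v, hv, q, hq, rfl⟩ := hx
  exact ⟨-s, Sp.neg hs, -v, c.hBneg hv, -q, Sp.neg hq, by rw [mul_neg]; abel⟩

lemma I_mul_S_left {p m : R} (hm : Sp (SG c a) m)
    (hgen : ∀ {t : R}, SG c a t → p*t ∈ Iset c a) : p*m ∈ Iset c a := by
  induction hm with
  | mem ht => exact hgen ht
  | zero => rw [mul_zero]; exact I_zero halt haB haC
  | add _ _ ih1 ih2 => rw [mul_add]; exact I_add halt haB haC ih1 ih2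
  | neg _ ih => rw [mul_neg]; exact I_neg halt haB haC ih

lemma I_mul_S_right {p m : R} (hm : Sp (SG c a) m)
    (hgen : ∀ {t : R}, SG c a t → t*p ∈ Iset c a) : m*p ∈ Iset c a := by
  induction hm with
  | mem ht => exact hgen ht
  | zero => rw [zero_mul]; exact I_zero halt haB haC
  | add _ _ ih1 ih2 => rw [add_mul]; exact I_add halt haB haC ih1 ih2
  | neg _ ih => rw [neg_mul]; exact I_neg halt haB haC ih

lemma I_mul_Q_left {p m : R} (hm : Sp (QG c a) m)
    (hgen : ∀ {t : R}, QG c a t → p*t ∈ Iset c a) : p*m ∈ Iset c a := by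
  induction hm with
  | mem ht => exact hgen ht
  | zero => rw [mul_zero]; exact I_zero halt haB haC
  | add _ _ ih1 ih2 => rw [mul_add]; exact I_add halt haB haC ih1 ih2
  | neg _ ih => rw [mul_neg]; exact I_neg halt haB haC ih

lemma I_mul_Q_right {p m : R} (hm : Sp (QG c a) m)
    (hgen : ∀ {t : R}, QG c a t → t*p ∈ Iset c a) : m*p ∈ Iset c a := by
  induction hm with
  | mem ht => exact hgen ht
  | zero => rw [zero_mul]; exact I_zero halt haB haC
  | add _ _ ih1 ih2 => rw [add_mul]; exact I_add halt haB haC ih1 ih2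
  | neg _ ih => rw [neg_mul]; exact I_neg halt haB haC ih

lemma I_ideal : IsIdealSet (Iset c a) := by
  refine ⟨I_zero halt haB haC, fun x hx y hy => I_add halt haB haC hx hy,
    fun x hx => I_neg halt haB haC hx, fun r x hx => ?_⟩
  obtain ⟨s, hs, v, hv, q, hq, rfl⟩ := hx
  obtain ⟨h, hhA, w, hwB, y, hyC, d, hdD, rfl⟩ := c.decomp r
  constructor
  · -- r * x
    rw [mul_add, mul_add]
    refine I_add halt haB haC (I_add halt haB haC ?_ ?_) ?_
    · -- (h+w+y+d) * s
      rw [add_mul, add_mul, add_mul]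
      refine I_add halt haB haC (I_add halt haB haC (I_add halt haB haC ?_ ?_) ?_) ?_
      · exact I_memS halt haB haC (SpS_mulA halt haB haC hhA hs)
      · refine I_mul_S_left halt haB haC hs ?_
        intro t ht
        obtain ⟨w', hw', hew⟩ := gSV halt haB haC ht w hwB
        have : w*t = a*(-w') := by
          rw [antiB hwB (gS_B halt haB haC ht), hew, mul_neg]
        rw [this]; exact I_memP halt haB haC (c.hBneg hw')
      · refine I_mul_S_left halt haB haC hs ?_
        intro t ht
        exact I_memQ halt haB haC (Sp.mem (gySQ halt haB haC ht y hyC))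
      · rw [Sp.mul_zero_left (fun ht => c.mDB hdD (gS_B halt haB haC ht)) hs]
        exact I_zero halt haB haC
    · -- (h+w+y+d) * (a*v)
      rw [add_mul, add_mul, add_mul]
      refine I_add halt haB haC (I_add halt haB haC (I_add halt haB haC ?_ ?_) ?_) ?_
      · rw [c.mAC hhA (c.mBB haB hv)]; exact I_zero halt haB haC
      · rw [gP3 halt haB haC w hwB v hv]; exact I_zero halt haB haC
      · have : y*(a*v) = -(a*(y*v)) := by
          rw [antiC hyC (c.mBB haB hv), gi9 halt haB haC v hv y hyC]
        rw [this]
        exact I_neg halt haB haC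
          (I_memS halt haB haC (Sp.mem (SG.stepD (c.mCB hyC hv) SG.base)))
      · rw [gi3' halt haB haC v hv d hdD]
        exact I_memP halt haB haC (c.mBD hv hdD)
    · -- (h+w+y+d) * q
      rw [add_mul, add_mul, add_mul]
      refine I_add halt haB haC (I_add halt haB haC (I_add halt haB haC ?_ ?_) ?_) ?_
      · rw [Sp.mul_zero_left (fun ht => c.mAD hhA (gQ_D halt haB haC ht)) hq]
        exact I_zero halt haB haC
      · refine I_mul_Q_left halt haB haC hq ?_
        intro t ht
        exact I_memS halt haB haC (gQB halt haB haC ht w hwB)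
      · rw [Sp.mul_zero_left (fun ht => c.mCD hyC (gQ_D halt haB haC ht)) hq]
        exact I_zero halt haB haC
      · refine I_mul_Q_left halt haB haC hq ?_
        intro t ht
        exact I_memQ halt haB haC (Sp.mem (QG.stepL hdD ht))
  · -- x * r
    rw [add_mul, add_mul]
    refine I_add halt haB haC (I_add halt haB haC ?_ ?_) ?_
    · -- s * (h+w+y+d)
      rw [mul_add, mul_add, mul_add]
      refine I_add halt haB haC (I_add halt haB haC (I_add halt haB haC ?_ ?_) ?_) ?_
      · rw [Sp.mul_zero_right (fun ht => c.mBA (gS_B halt haB haC ht) hhA) hs]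
        exact I_zero halt haB haC
      · refine I_mul_S_right halt haB haC hs ?_
        intro t ht
        obtain ⟨w', hw', hew⟩ := gSV halt haB haC ht w hwB
        rw [hew]; exact I_memP halt haB haC hw'
      · rw [Sp.mul_zero_right (fun ht => gK2 halt haB haC ht y hyC) hs]
        exact I_zero halt haB haC
      · exact I_memS halt haB haC (SpS_mulD halt haB haC hdD hs)
    · -- (a*v) * (h+w+y+d)
      rw [mul_add, mul_add, mul_add]
      refine I_add halt haB haC (I_add halt haB haC (I_add halt haB haC ?_ ?_) ?_) ?_
      · rw [gi10 halt haB haC v hv h hhA]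
        exact I_memP halt haB haC (c.mAB hhA hv)
      · exact I_memQ halt haB haC (Sp.mem (QG.gen2 hv hwB))
      · rw [gi9 halt haB haC v hv y hyC]
        exact I_memS halt haB haC (Sp.mem (SG.stepD (c.mCB hyC hv) SG.base))
      · rw [c.mCD (c.mBB haB hv) hdD]; exact I_zero halt haB haC
    · -- q * (h+w+y+d)
      rw [mul_add, mul_add, mul_add]
      refine I_add halt haB haC (I_add halt haB haC (I_add halt haB haC ?_ ?_) ?_) ?_
      · rw [Sp.mul_zero_right (fun ht => c.mDA (gQ_D halt haB haC ht) hhA) hq]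
        exact I_zero halt haB haC
      · rw [Sp.mul_zero_right (fun ht => c.mDB (gQ_D halt haB haC ht) hwB) hq]
        exact I_zero halt haB haC
      · refine I_mul_Q_right halt haB haC hq ?_
        intro t ht
        obtain ⟨v', hv', hev⟩ := gQC halt haB haC ht y hyC
        rw [hev]; exact I_memP halt haB haC hv'
      · refine I_mul_Q_right halt haB haC hq ?_
        intro t ht
        exact I_memQ halt haB haC (Sp.mem (QG.stepR hdD ht))

lemma I_ann : ∀ i ∈ Iset c a, a * i = 0 := by
  intro i hi
  obtain ⟨s, hs, v, hv, q, hq, rfl⟩ := hi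
  rw [mul_add, mul_add,
    Sp.mul_zero_left (fun ht => gL2 halt haB haC ht SG.base) hs,
    haC (a*v) (c.mBB haB hv),
    Sp.mul_zero_left (fun ht => gSQ0 halt haB haC ht SG.base) hq]
  simp

end pc1sec3

theorem pc1 {c : PCtx R} (halt : IsAlt R) (hprime : IsPrimeRing R) :
    ∀ x ∈ c.B, (∀ y ∈ c.C, x*y = 0) → x = 0 := by
  intro a haB haC
  refine ann_self halt hprime (I_ideal halt haB haC) ?_ (I_ann halt haB haC)
  exact I_memS halt haB haC (Sp.mem SG.base)

end PCtx


section Assemble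
variable (halt : IsAlt R) (e : R) (he : e*e = e)

def mkCtx1 (halt : IsAlt R) (e : R) (he : e*e = e) : PCtx R where
  A := P11 e
  B := P12 e
  C := P21 e
  D := P22 e
  hA0 := ⟨mul_zero e, zero_mul e⟩
  hB0 := ⟨mul_zero e, zero_mul e⟩
  hC0 := ⟨mul_zero e, zero_mul e⟩
  hD0 := ⟨mul_zero e, zero_mul e⟩
  hAadd := fun hx hy => ⟨by rw [mul_add, hx.1, hy.1], by rw [add_mul, hx.2, hy.2]⟩
  hBadd := fun hx hy => ⟨by rw [mul_add, hx.1, hy.1], by rw [add_mul, hx.2, hy.2, add_zero]⟩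
  hCadd := fun hx hy => ⟨by rw [mul_add, hx.1, hy.1, add_zero], by rw [add_mul, hx.2, hy.2]⟩
  hDadd := fun hx hy => ⟨by rw [mul_add, hx.1, hy.1, add_zero], by rw [add_mul, hx.2, hy.2, add_zero]⟩
  hAneg := fun hx => ⟨by rw [mul_neg, hx.1], by rw [neg_mul, hx.2]⟩
  hBneg := fun hx => ⟨by rw [mul_neg, hx.1], by rw [neg_mul, hx.2, neg_zero]⟩
  hCneg := fun hx => ⟨by rw [mul_neg, hx.1, neg_zero], by rw [neg_mul, hx.2]⟩
  hDneg := fun hx => ⟨by rw [mul_neg, hx.1, neg_zero], by rw [neg_mul, hx.2, neg_zero]⟩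
  mAA := fun hx hy => m1111 halt e he hx hy
  mAB := fun hx hy => m1112 halt e he hx hy
  mAC := fun hx hy => m1121 halt e he hx hy
  mAD := fun hx hy => m1122 halt e he hx hy
  mBA := fun hx hy => m1211 halt e he hx hy
  mBB := fun hx hy => m1212 halt e he hx hy
  mBC := fun hx hy => m1221 halt e he hx hy
  mBD := fun hx hy => m1222 halt e he hx hy
  mCA := fun hx hy => m2111 halt e he hx hy
  mCB := fun hx hy => m2112 halt e he hx hy
  mCC := fun hx hy => m2121 halt e he hx hy
  mCD := fun hx hy => m2122 halt e he hx hy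
  mDA := fun hx hy => m2211 halt e he hx hy
  mDB := fun hx hy => m2212 halt e he hx hy
  mDC := fun hx hy => m2221 halt e he hx hy
  mDD := fun hx hy => m2222 halt e he hx hy
  sqB := fun hx => sq_12 halt e he hx
  sqC := fun hx => sq_21 halt e he hx
  decomp := fun x => pdecomp halt e he x
  direct := fun hp hq hu hv h => pdirect halt e he hp hq hu hv h

def mkCtx2 (halt : IsAlt R) (e : R) (he : e*e = e) : PCtx R where
  A := P22 e
  B := P21 e
  C := P12 e
  D := P11 e
  hA0 := ⟨mul_zero e, zero_mul e⟩
  hB0 := ⟨mul_zero e, zero_mul e⟩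
  hC0 := ⟨mul_zero e, zero_mul e⟩
  hD0 := ⟨mul_zero e, zero_mul e⟩
  hAadd := fun hx hy => ⟨by rw [mul_add, hx.1, hy.1, add_zero], by rw [add_mul, hx.2, hy.2, add_zero]⟩
  hBadd := fun hx hy => ⟨by rw [mul_add, hx.1, hy.1, add_zero], by rw [add_mul, hx.2, hy.2]⟩
  hCadd := fun hx hy => ⟨by rw [mul_add, hx.1, hy.1], by rw [add_mul, hx.2, hy.2, add_zero]⟩
  hDadd := fun hx hy => ⟨by rw [mul_add, hx.1, hy.1], by rw [add_mul, hx.2, hy.2]⟩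
  hAneg := fun hx => ⟨by rw [mul_neg, hx.1, neg_zero], by rw [neg_mul, hx.2, neg_zero]⟩
  hBneg := fun hx => ⟨by rw [mul_neg, hx.1, neg_zero], by rw [neg_mul, hx.2]⟩
  hCneg := fun hx => ⟨by rw [mul_neg, hx.1], by rw [neg_mul, hx.2, neg_zero]⟩
  hDneg := fun hx => ⟨by rw [mul_neg, hx.1], by rw [neg_mul, hx.2]⟩
  mAA := fun hx hy => m2222 halt e he hx hy
  mAB := fun hx hy => m2221 halt e he hx hy
  mAC := fun hx hy => m2212 halt e he hx hy
  mAD := fun hx hy => m2211 halt e he hx hy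
  mBA := fun hx hy => m2122 halt e he hx hy
  mBB := fun hx hy => m2121 halt e he hx hy
  mBC := fun hx hy => m2112 halt e he hx hy
  mBD := fun hx hy => m2111 halt e he hx hy
  mCA := fun hx hy => m1222 halt e he hx hy
  mCB := fun hx hy => m1221 halt e he hx hy
  mCC := fun hx hy => m1212 halt e he hx hy
  mCD := fun hx hy => m1211 halt e he hx hy
  mDA := fun hx hy => m1122 halt e he hx hy
  mDB := fun hx hy => m1121 halt e he hx hy
  mDC := fun hx hy => m1112 halt e he hx hy
  mDD := fun hx hy => m1111 halt e he hx hy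
  sqB := fun hx => sq_21 halt e he hx
  sqC := fun hx => sq_12 halt e he hx
  decomp := by
    intro x
    obtain ⟨p, hp, q, hq, u, hu, v, hv, hx⟩ := pdecomp halt e he x
    exact ⟨v, hv, u, hu, q, hq, p, hp, by rw [hx]; abel⟩
  direct := by
    intro p q u v hp hq hu hv h
    have h' : v + u + q + p = 0 := by linear_combination (norm := abel) h
    obtain ⟨h1, h2, h3, h4⟩ := pdirect halt e he hv hu hq hp h'
    exact ⟨h4, h3, h2, h1⟩

include halt he

lemma exnz (hprime : IsPrimeRing R) (hne : e ≠ 0) (hnu : ¬ ∀ x : R, e * x = x ∧ x * e = x) :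
    ∃ t : R, (t ∈ P12 e ∨ t ∈ P21 e) ∧ t ≠ 0 := by
  by_contra hcon
  push_neg at hcon
  have h12 : ∀ t ∈ P12 e, t = 0 := fun t ht => hcon t (Or.inl ht)
  have h21 : ∀ t ∈ P21 e, t = 0 := fun t ht => hcon t (Or.inr ht)
  have key : ∀ r : R, ∃ p ∈ P11 e, ∃ v ∈ P22 e, r = p + v := by
    intro r
    obtain ⟨p, hp, q, hq, u, hu, v, hv, hx⟩ := pdecomp halt e he r
    rw [h12 q hq, h21 u hu] at hx
    exact ⟨p, hp, v, hv, by rw [hx]; abel⟩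
  have hI11 : IsIdealSet (P11 e) := by
    refine ⟨⟨mul_zero e, zero_mul e⟩,
      fun a ha b hb => ⟨by rw [mul_add, ha.1, hb.1], by rw [add_mul, ha.2, hb.2]⟩,
      fun a ha => ⟨by rw [mul_neg, ha.1], by rw [neg_mul, ha.2]⟩, fun r x hx => ?_⟩
    obtain ⟨p, hp, v, hv, rfl⟩ := key r
    constructor
    · rw [add_mul, m2211 halt e he hv hx, add_zero]
      exact m1111 halt e he hp hx
    · rw [mul_add, m1122 halt e he hx hv, add_zero]
      exact m1111 halt e he hx hp
  have hI22 : IsIdealSet (P22 e) := by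
    refine ⟨⟨mul_zero e, zero_mul e⟩,
      fun a ha b hb => ⟨by rw [mul_add, ha.1, hb.1, add_zero], by rw [add_mul, ha.2, hb.2, add_zero]⟩,
      fun a ha => ⟨by rw [mul_neg, ha.1, neg_zero], by rw [neg_mul, ha.2, neg_zero]⟩,
      fun r x hx => ?_⟩
    obtain ⟨p, hp, v, hv, rfl⟩ := key r
    constructor
    · rw [add_mul, m1122 halt e he hp hx, zero_add]
      exact m2222 halt e he hv hx
    · rw [mul_add, m2211 halt e he hx hp, zero_add]
      exact m2222 halt e he hx hv
  have h22z : ∀ v ∈ P22 e, v = 0 := by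
    intro v hv
    by_contra hv0
    obtain ⟨a', ha', b', hb', hab⟩ := hprime (P11 e) (P22 e) hI11 hI22
      (ne_zero_set halt hprime (⟨he, he⟩ : e ∈ P11 e) hne)
      (ne_zero_set halt hprime hv hv0)
    exact hab (m1122 halt e he ha' hb')
  apply hnu
  intro x
  obtain ⟨p, hp, q, hq, u, hu, v, hv, hx⟩ := pdecomp halt e he x
  rw [h12 q hq, h21 u hu, h22z v hv] at hx
  have hx' : x = p := by rw [hx]; abel
  rw [hx']
  exact hp

end Assemble


end Stmt8Aux

theorem stmt8 {R : Type*} [NonUnitalNonAssocRing R] (halt : IsAlt R)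
    (htor3 : ∀ x : R, (3 : ℕ) • x = 0 → x = 0)
    (hprime : IsPrimeRing R)
    (e₁ : R) (he : e₁ * e₁ = e₁) (hne : e₁ ≠ 0)
    (hnu : ¬ ∀ x : R, e₁ * x = x ∧ x * e₁ = x) :
    ((∀ x ∈ P12 e₁, (∀ y ∈ P21 e₁, x * y = 0) → x = 0) ∧
     (∀ x ∈ P21 e₁, (∀ y ∈ P12 e₁, x * y = 0) → x = 0)) ∧
    ((∀ x ∈ P11 e₁, (∀ y ∈ P12 e₁, x * y = 0) → x = 0) ∧
     (∀ x ∈ P11 e₁, (∀ y ∈ P21 e₁, y * x = 0) → x = 0)) ∧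
    ((∀ x ∈ P22 e₁, (∀ y ∈ P12 e₁, y * x = 0) → x = 0) ∧
     (∀ x ∈ P22 e₁, (∀ y ∈ P21 e₁, x * y = 0) → x = 0)) := by
  obtain ⟨t, ht, ht0⟩ := Stmt8Aux.exnz halt e₁ he hprime hne hnu
  have hnz1 : ∃ t : R, (t ∈ (Stmt8Aux.mkCtx1 halt e₁ he).B ∨
      t ∈ (Stmt8Aux.mkCtx1 halt e₁ he).C) ∧ t ≠ 0 := ⟨t, ht, ht0⟩
  have hnz2 : ∃ t : R, (t ∈ (Stmt8Aux.mkCtx2 halt e₁ he).B ∨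
      t ∈ (Stmt8Aux.mkCtx2 halt e₁ he).C) ∧ t ≠ 0 := ⟨t, ht.symm, ht0⟩
  refine ⟨⟨?_, ?_⟩, ⟨?_, ?_⟩, ⟨?_, ?_⟩⟩
  · exact Stmt8Aux.PCtx.pc1 (c := Stmt8Aux.mkCtx1 halt e₁ he) halt hprime
  · exact Stmt8Aux.PCtx.pc1 (c := Stmt8Aux.mkCtx2 halt e₁ he) halt hprime
  · exact Stmt8Aux.PCtx.pc2 (c := Stmt8Aux.mkCtx1 halt e₁ he) halt hprime hnz1
  · exact Stmt8Aux.PCtx.pc3 (c := Stmt8Aux.mkCtx1 halt e₁ he) halt hprime hnz1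
  · exact Stmt8Aux.PCtx.pc3 (c := Stmt8Aux.mkCtx2 halt e₁ he) halt hprime hnz2
  · exact Stmt8Aux.PCtx.pc2 (c := Stmt8Aux.mkCtx2 halt e₁ he) halt hprime hnz2
end

section
/- Let R be a 2- and 3-torsion free alternative ring with a nontrivial idempotent e₁ satisfying conditions (1), (2) and (3). Then: (♠) whenever a₁₁ ∈ R₁₁ and a₂₂ ∈ R₂₂ satisfy [a₁₁ + a₂₂, x] = 0 for all x ∈ R₁₂, one has a₁₁ + a₂₂ ∈ Z(R); and (♣) whenever a₁₁ ∈ R₁₁ and a₂₂ ∈ R₂₂ satisfy [a₁₁ + a₂₂, x] = 0 for all x ∈ R₂₁, one has a₁₁ + a₂₂ ∈ Z(R). -/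
section AuxAlt

variable {R : Type*} [NonUnitalNonAssocRing R]

/-- The associator. -/
private def asc (x y z : R) : R := x * y * z - x * (y * z)

private lemma asc_swap12 (halt : IsAlt R) (x y z : R) : asc x y z = - asc y x z := by
  have h := (halt (x + y) z).1
  have h1 := (halt x z).1
  have h2 := (halt y z).1
  simp only [add_mul, mul_add] at h
  simp only [asc]
  linear_combination (norm := abel) h - h1 - h2

private lemma asc_swap23 (halt : IsAlt R) (x y z : R) : asc x y z = - asc x z y := by
  have h := (halt (y + z) x).2
  have h1 := (halt y x).2
  have h2 := (halt z x).2
  simp only [add_mul, mul_add] at h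
  simp only [asc]
  linear_combination (norm := abel) h - h1 - h2

private lemma asc_cyc (halt : IsAlt R) (x y z : R) : asc x y z = asc y z x := by
  rw [asc_swap12 halt x y z, asc_swap23 halt y x z, neg_neg]

/-- Left multiplication by `e` of a product. -/
private lemma mulL (halt : IsAlt R) (e s t : R) :
    e * (s * t) = (e * s) * t + (s * e) * t - s * (e * t) := by
  have h := asc_swap12 halt e s t
  simp only [asc] at h
  linear_combination (norm := abel) -h

/-- Right multiplication by `e` of a product. -/
private lemma mulR (halt : IsAlt R) (e s t : R) :
    (s * t) * e = s * (t * e) - (s * e) * t + s * (e * t) := by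
  have h := asc_swap23 halt s e t
  simp only [asc] at h
  linear_combination (norm := abel) h

private lemma eflex (halt : IsAlt R) (e s : R) : (e * s) * e = e * (s * e) := by
  have h1 := asc_swap12 halt e s e
  have h2 := (halt e s).2
  simp only [asc] at h1
  linear_combination (norm := abel) h1 - h2

end AuxAlt
section AuxAlt2

variable {R : Type*} [NonUnitalNonAssocRing R]

private lemma two_eq_zero (htor2 : ∀ x : R, (2 : ℕ) • x = 0 → x = 0) {p : R}
    (h : p + p = 0) : p = 0 :=
  htor2 p (by rw [two_nsmul]; exact h)

private lemma three_eq_zero (htor3 : ∀ x : R, (3 : ℕ) • x = 0 → x = 0) {p : R}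
    (h : p + p + p = 0) : p = 0 :=
  htor3 p (by rw [show (3 : ℕ) = 2 + 1 from rfl, add_nsmul, two_nsmul, one_nsmul]; exact h)

private lemma left_absorb (halt : IsAlt R) (htor2 : ∀ x : R, (2 : ℕ) • x = 0 → x = 0)
    {e p : R} (he : e * e = e) (h : e * p = p + p) : p = 0 := by
  have h1 := (halt e p).1
  rw [he, h, mul_add, h] at h1
  exact two_eq_zero htor2 (by linear_combination (norm := abel) -h1)

private lemma left_neg_absorb (halt : IsAlt R) (htor2 : ∀ x : R, (2 : ℕ) • x = 0 → x = 0)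
    {e p : R} (he : e * e = e) (h : e * p = -p) : p = 0 := by
  have h1 := (halt e p).1
  rw [he, h, mul_neg, h, neg_neg] at h1
  exact two_eq_zero htor2 (by linear_combination (norm := abel) -h1)

private lemma right_absorb (halt : IsAlt R) (htor2 : ∀ x : R, (2 : ℕ) • x = 0 → x = 0)
    {e p : R} (he : e * e = e) (h : p * e = p + p) : p = 0 := by
  have h1 := (halt e p).2
  rw [he, h, add_mul, h] at h1
  exact two_eq_zero htor2 (by linear_combination (norm := abel) h1)

private lemma right_neg_absorb (halt : IsAlt R) (htor2 : ∀ x : R, (2 : ℕ) • x = 0 → x = 0)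
    {e p : R} (he : e * e = e) (h : p * e = -p) : p = 0 := by
  have h1 := (halt e p).2
  rw [he, h, neg_mul, h, neg_neg] at h1
  exact two_eq_zero htor2 (by linear_combination (norm := abel) h1)

end AuxAlt2
section PeirceTable

variable {R : Type*} [NonUnitalNonAssocRing R]

-- The six vanishing products.
private lemma P12_mul_P11 (halt : IsAlt R) (htor2 : ∀ x : R, (2 : ℕ) • x = 0 → x = 0)
    {e x a : R} (he : e * e = e) (hx : x ∈ P12 e) (ha : a ∈ P11 e) : x * a = 0 := by
  obtain ⟨hx1, hx2⟩ := hx; obtain ⟨ha1, ha2⟩ := ha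
  refine right_absorb halt htor2 he ?_
  rw [mulR halt e x a, ha2, hx2, zero_mul, ha1]
  abel

private lemma P22_mul_P12 (halt : IsAlt R) (htor2 : ∀ x : R, (2 : ℕ) • x = 0 → x = 0)
    {e b x : R} (he : e * e = e) (hb : b ∈ P22 e) (hx : x ∈ P12 e) : b * x = 0 := by
  obtain ⟨hb1, hb2⟩ := hb; obtain ⟨hx1, hx2⟩ := hx
  refine left_neg_absorb halt htor2 he ?_
  rw [mulL halt e b x, hb1, hb2, zero_mul, hx1]
  abel

private lemma P11_mul_P22 (halt : IsAlt R) (htor2 : ∀ x : R, (2 : ℕ) • x = 0 → x = 0)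
    {e a b : R} (he : e * e = e) (ha : a ∈ P11 e) (hb : b ∈ P22 e) : a * b = 0 := by
  obtain ⟨ha1, ha2⟩ := ha; obtain ⟨hb1, hb2⟩ := hb
  refine left_absorb halt htor2 he ?_
  rw [mulL halt e a b, ha1, ha2, hb1, mul_zero]
  abel

private lemma P22_mul_P11 (halt : IsAlt R) (htor2 : ∀ x : R, (2 : ℕ) • x = 0 → x = 0)
    {e b a : R} (he : e * e = e) (hb : b ∈ P22 e) (ha : a ∈ P11 e) : b * a = 0 := by
  obtain ⟨hb1, hb2⟩ := hb; obtain ⟨ha1, ha2⟩ := ha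
  refine left_neg_absorb halt htor2 he ?_
  rw [mulL halt e b a, hb1, hb2, zero_mul, ha1]
  abel

private lemma P11_mul_P21 (halt : IsAlt R) (htor2 : ∀ x : R, (2 : ℕ) • x = 0 → x = 0)
    {e a y : R} (he : e * e = e) (ha : a ∈ P11 e) (hy : y ∈ P21 e) : a * y = 0 := by
  obtain ⟨ha1, ha2⟩ := ha; obtain ⟨hy1, hy2⟩ := hy
  refine left_absorb halt htor2 he ?_
  rw [mulL halt e a y, ha1, ha2, hy1, mul_zero]
  abel

private lemma P21_mul_P22 (halt : IsAlt R) (htor2 : ∀ x : R, (2 : ℕ) • x = 0 → x = 0)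
    {e y b : R} (he : e * e = e) (hy : y ∈ P21 e) (hb : b ∈ P22 e) : y * b = 0 := by
  obtain ⟨hy1, hy2⟩ := hy; obtain ⟨hb1, hb2⟩ := hb
  refine right_neg_absorb halt htor2 he ?_
  rw [mulR halt e y b, hb2, mul_zero, hy2, hb1, mul_zero]
  abel

-- The eight closure rules needed.
private lemma P11_mul_P11 (halt : IsAlt R) {e a b : R}
    (ha : a ∈ P11 e) (hb : b ∈ P11 e) : a * b ∈ P11 e := by
  obtain ⟨ha1, ha2⟩ := ha; obtain ⟨hb1, hb2⟩ := hb
  refine ⟨?_, ?_⟩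
  · rw [mulL halt e a b, ha1, ha2, hb1]; abel
  · rw [mulR halt e a b, hb2, ha2, hb1]; abel

private lemma P11_mul_P12 (halt : IsAlt R) {e a x : R}
    (ha : a ∈ P11 e) (hx : x ∈ P12 e) : a * x ∈ P12 e := by
  obtain ⟨ha1, ha2⟩ := ha; obtain ⟨hx1, hx2⟩ := hx
  refine ⟨?_, ?_⟩
  · rw [mulL halt e a x, ha1, ha2, hx1]; abel
  · rw [mulR halt e a x, hx2, mul_zero, ha2, hx1]; abel

private lemma P12_mul_P22 (halt : IsAlt R) {e x b : R}
    (hx : x ∈ P12 e) (hb : b ∈ P22 e) : x * b ∈ P12 e := by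
  obtain ⟨hx1, hx2⟩ := hx; obtain ⟨hb1, hb2⟩ := hb
  refine ⟨?_, ?_⟩
  · rw [mulL halt e x b, hx1, hx2, zero_mul, hb1, mul_zero]; abel
  · rw [mulR halt e x b, hb2, mul_zero, hx2, zero_mul, hb1, mul_zero]; abel

private lemma P12_mul_P21 (halt : IsAlt R) {e x y : R}
    (hx : x ∈ P12 e) (hy : y ∈ P21 e) : x * y ∈ P11 e := by
  obtain ⟨hx1, hx2⟩ := hx; obtain ⟨hy1, hy2⟩ := hy
  refine ⟨?_, ?_⟩
  · rw [mulL halt e x y, hx1, hx2, zero_mul, hy1, mul_zero]; abel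
  · rw [mulR halt e x y, hy2, hx2, zero_mul, hy1, mul_zero]; abel

private lemma P21_mul_P12 (halt : IsAlt R) {e y x : R}
    (hy : y ∈ P21 e) (hx : x ∈ P12 e) : y * x ∈ P22 e := by
  obtain ⟨hy1, hy2⟩ := hy; obtain ⟨hx1, hx2⟩ := hx
  refine ⟨?_, ?_⟩
  · rw [mulL halt e y x, hy1, hy2, zero_mul, hx1]; abel
  · rw [mulR halt e y x, hx2, mul_zero, hy2, hx1]; abel

private lemma P22_mul_P22 (halt : IsAlt R) {e b c : R}
    (hb : b ∈ P22 e) (hc : c ∈ P22 e) : b * c ∈ P22 e := by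
  obtain ⟨hb1, hb2⟩ := hb; obtain ⟨hc1, hc2⟩ := hc
  refine ⟨?_, ?_⟩
  · rw [mulL halt e b c, hb1, hb2, zero_mul, hc1, mul_zero]; abel
  · rw [mulR halt e b c, hc2, mul_zero, hb2, zero_mul, hc1, mul_zero]; abel

private lemma P21_mul_P11 (halt : IsAlt R) {e y a : R}
    (hy : y ∈ P21 e) (ha : a ∈ P11 e) : y * a ∈ P21 e := by
  obtain ⟨hy1, hy2⟩ := hy; obtain ⟨ha1, ha2⟩ := ha
  refine ⟨?_, ?_⟩
  · rw [mulL halt e y a, hy1, hy2, zero_mul, ha1]; abel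
  · rw [mulR halt e y a, ha2, hy2, ha1]; abel

private lemma P22_mul_P21 (halt : IsAlt R) {e b y : R}
    (hb : b ∈ P22 e) (hy : y ∈ P21 e) : b * y ∈ P21 e := by
  obtain ⟨hb1, hb2⟩ := hb; obtain ⟨hy1, hy2⟩ := hy
  refine ⟨?_, ?_⟩
  · rw [mulL halt e b y, hb1, hb2, zero_mul, hy1, mul_zero]; abel
  · rw [mulR halt e b y, hy2, hb2, zero_mul, hy1, mul_zero]; abel

-- Closure of the components under subtraction.
private lemma P11_sub {e x y : R} (hx : x ∈ P11 e) (hy : y ∈ P11 e) : x - y ∈ P11 e :=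
  ⟨by rw [mul_sub, hx.1, hy.1], by rw [sub_mul, hx.2, hy.2]⟩

private lemma P12_sub {e x y : R} (hx : x ∈ P12 e) (hy : y ∈ P12 e) : x - y ∈ P12 e :=
  ⟨by rw [mul_sub, hx.1, hy.1], by rw [sub_mul, hx.2, hy.2, sub_zero]⟩

private lemma P21_sub {e x y : R} (hx : x ∈ P21 e) (hy : y ∈ P21 e) : x - y ∈ P21 e :=
  ⟨by rw [mul_sub, hx.1, hy.1, sub_zero], by rw [sub_mul, hx.2, hy.2]⟩

private lemma P22_sub {e x y : R} (hx : x ∈ P22 e) (hy : y ∈ P22 e) : x - y ∈ P22 e :=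
  ⟨by rw [mul_sub, hx.1, hy.1, sub_zero], by rw [sub_mul, hx.2, hy.2, sub_zero]⟩

end PeirceTable
section Steps

variable {R : Type*} [NonUnitalNonAssocRing R]

/-- The fundamental commutator identity in an alternative ring. -/
private lemma comm_mul (halt : IsAlt R) (u r x : R) :
    (u * r - r * u) * x =
      (u * (r * x) - (r * x) * u) - r * (u * x - x * u)
        + (asc u r x + asc u r x + asc u r x) := by
  have h1 := asc_swap12 halt u r x
  have h2 := asc_cyc halt u r x
  simp only [asc] at h1 h2
  simp only [asc, sub_mul, mul_sub]
  linear_combination (norm := abel) -h1 - h2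

/-- Peirce decomposition. -/
private lemma peirce_decomp (halt : IsAlt R) {e : R} (he : e * e = e) (t : R) :
    ∃ p ∈ P11 e, ∃ q ∈ P12 e, ∃ u ∈ P21 e, ∃ v ∈ P22 e, t = p + q + u + v := by
  have hle : ∀ s : R, e * (e * s) = e * s := fun s => by rw [← (halt e s).1, he]
  have hre : ∀ s : R, (s * e) * e = s * e := fun s => by rw [(halt e s).2, he]
  have hfx : ∀ s : R, (e * s) * e = e * (s * e) := eflex halt e
  have hpe : (e * (t * e)) * e = e * (t * e) := by rw [hfx (t * e), hre t]
  refine ⟨e * (t * e), ⟨hle (t * e), hpe⟩,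
    e * t - e * (t * e), ⟨?_, ?_⟩,
    t * e - e * (t * e), ⟨?_, ?_⟩,
    t - e * t - t * e + e * (t * e), ⟨?_, ?_⟩, by abel⟩
  · rw [mul_sub, hle t, hle (t * e)]
  · rw [sub_mul, hfx t, hpe, sub_self]
  · rw [mul_sub, hle (t * e), sub_self]
  · rw [sub_mul, hre t, hpe]
  · rw [mul_add, mul_sub, mul_sub, hle t, hle (t * e)]; abel
  · rw [add_mul, sub_mul, sub_mul, hfx t, hre t, hpe]; abel

/-- Step: `a+b` commutes with `R₁₁` (hypothesis on `R₁₂`). -/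
private lemma step11 (halt : IsAlt R)
    (htor2 : ∀ x : R, (2 : ℕ) • x = 0 → x = 0)
    (htor3 : ∀ x : R, (3 : ℕ) • x = 0 → x = 0)
    {e a b : R} (he : e * e = e)
    (hc2a : ∀ x ∈ P11 e, (∀ y ∈ P12 e, x * y = 0) → x = 0)
    (ha : a ∈ P11 e) (hb : b ∈ P22 e)
    (hcom : ∀ x ∈ P12 e, (a + b) * x = x * (a + b)) :
    ∀ r ∈ P11 e, (a + b) * r = r * (a + b) := by
  intro r hr
  have hur : (a + b) * r = a * r := by
    rw [add_mul, P22_mul_P11 halt htor2 he hb hr, add_zero]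
  have hru : r * (a + b) = r * a := by
    rw [mul_add, P11_mul_P22 halt htor2 he hr hb, add_zero]
  have hcmem : a * r - r * a ∈ P11 e :=
    P11_sub (P11_mul_P11 halt ha hr) (P11_mul_P11 halt hr ha)
  have hkey : ∀ x ∈ P12 e, (a * r - r * a) * x = 0 := by
    intro x hx
    have e2 : (a + b) * x - x * (a + b) = 0 := sub_eq_zero.mpr (hcom x hx)
    have e1 : (a + b) * (r * x) - (r * x) * (a + b) = 0 :=
      sub_eq_zero.mpr (hcom _ (P11_mul_P12 halt hr hx))
    have hxr : x * r = 0 := P12_mul_P11 halt htor2 he hx hr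
    have hxc : x * ((a + b) * r - r * (a + b)) = 0 := by
      rw [hur, hru]
      exact P12_mul_P11 halt htor2 he hx hcmem
    have h2 := comm_mul halt (a + b) x r
    rw [e2, zero_mul, hxr, mul_zero, zero_mul, hxc] at h2
    have hT : asc (a + b) x r = 0 :=
      three_eq_zero htor3 (by linear_combination (norm := abel) -h2)
    have hA : asc (a + b) r x = 0 := by rw [asc_swap23 halt, hT, neg_zero]
    have h1 := comm_mul halt (a + b) r x
    rw [e1, e2, mul_zero, hA, hur, hru] at h1
    simpa using h1
  have hc0 : a * r - r * a = 0 := hc2a _ hcmem hkey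
  rw [hur, hru]
  exact sub_eq_zero.mp hc0

/-- Step: `a+b` commutes with `R₂₂` (hypothesis on `R₁₂`). -/
private lemma step22 (halt : IsAlt R)
    (htor2 : ∀ x : R, (2 : ℕ) • x = 0 → x = 0)
    (htor3 : ∀ x : R, (3 : ℕ) • x = 0 → x = 0)
    {e a b : R} (he : e * e = e)
    (hc3a : ∀ x ∈ P22 e, (∀ y ∈ P12 e, y * x = 0) → x = 0)
    (ha : a ∈ P11 e) (hb : b ∈ P22 e)
    (hcom : ∀ x ∈ P12 e, (a + b) * x = x * (a + b)) :
    ∀ s ∈ P22 e, (a + b) * s = s * (a + b) := by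
  intro s hs
  have hus : (a + b) * s = b * s := by
    rw [add_mul, P11_mul_P22 halt htor2 he ha hs, zero_add]
  have hsu : s * (a + b) = s * b := by
    rw [mul_add, P22_mul_P11 halt htor2 he hs ha, zero_add]
  have hdmem : b * s - s * b ∈ P22 e :=
    P22_sub (P22_mul_P22 halt hb hs) (P22_mul_P22 halt hs hb)
  have hkey : ∀ x ∈ P12 e, x * (b * s - s * b) = 0 := by
    intro x hx
    have e2 : (a + b) * x - x * (a + b) = 0 := sub_eq_zero.mpr (hcom x hx)
    have hsx : s * x = 0 := P22_mul_P12 halt htor2 he hs hx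
    have hdx : ((a + b) * s - s * (a + b)) * x = 0 := by
      rw [hus, hsu]
      exact P22_mul_P12 halt htor2 he hdmem hx
    have h2 := comm_mul halt (a + b) s x
    rw [hdx, e2, mul_zero, hsx, mul_zero, zero_mul] at h2
    have hC : asc (a + b) s x = 0 :=
      three_eq_zero htor3 (by linear_combination (norm := abel) -h2)
    have hB : asc (a + b) x s = 0 := by rw [asc_swap23 halt, hC, neg_zero]
    have e1 : (a + b) * (x * s) - (x * s) * (a + b) = 0 :=
      sub_eq_zero.mpr (hcom _ (P12_mul_P22 halt hx hs))
    have h1 := comm_mul halt (a + b) x s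
    rw [e2, zero_mul, e1, hus, hsu, hB] at h1
    linear_combination (norm := abel) h1
  have hd0 : b * s - s * b = 0 := hc3a _ hdmem hkey
  rw [hus, hsu]
  exact sub_eq_zero.mp hd0

/-- Step: `a+b` commutes with `R₂₁` (hypothesis on `R₁₂`). -/
private lemma step21 (halt : IsAlt R)
    (htor2 : ∀ x : R, (2 : ℕ) • x = 0 → x = 0)
    {e a b : R} (he : e * e = e)
    (hc1b : ∀ x ∈ P21 e, (∀ y ∈ P12 e, x * y = 0) → x = 0)
    (ha : a ∈ P11 e) (hb : b ∈ P22 e)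
    (hcom : ∀ x ∈ P12 e, (a + b) * x = x * (a + b))
    (h11 : ∀ r ∈ P11 e, (a + b) * r = r * (a + b))
    (h22 : ∀ s ∈ P22 e, (a + b) * s = s * (a + b)) :
    ∀ y ∈ P21 e, (a + b) * y = y * (a + b) := by
  intro y hy
  have huy : (a + b) * y = b * y := by
    rw [add_mul, P11_mul_P21 halt htor2 he ha hy, zero_add]
  have hyu : y * (a + b) = y * a := by
    rw [mul_add, P21_mul_P22 halt htor2 he hy hb, add_zero]
  have hzmem : b * y - y * a ∈ P21 e :=
    P21_sub (P22_mul_P21 halt hb hy) (P21_mul_P11 halt hy ha)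
  have hkey : ∀ x ∈ P12 e, (b * y - y * a) * x = 0 := by
    intro x hx
    have e2 : (a + b) * x - x * (a + b) = 0 := sub_eq_zero.mpr (hcom x hx)
    have eyx : (a + b) * (y * x) - (y * x) * (a + b) = 0 :=
      sub_eq_zero.mpr (h22 _ (P21_mul_P12 halt hy hx))
    have exy : (a + b) * (x * y) - (x * y) * (a + b) = 0 :=
      sub_eq_zero.mpr (h11 _ (P12_mul_P21 halt hx hy))
    have h1 := comm_mul halt (a + b) y x
    rw [eyx, e2, mul_zero, huy, hyu] at h1
    have h2 := comm_mul halt (a + b) x y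
    rw [e2, zero_mul, exy, huy, hyu, asc_swap23 halt (a + b) x y] at h2
    have hsum : (b * y - y * a) * x + x * (b * y - y * a) = 0 := by
      linear_combination (norm := abel) h1 + h2
    have hPmem : (b * y - y * a) * x ∈ P22 e := P21_mul_P12 halt hzmem hx
    have hQmem : x * (b * y - y * a) ∈ P11 e := P12_mul_P21 halt hx hzmem
    have h0 := congrArg (fun w => e * w) hsum
    simp only [mul_add, mul_zero] at h0
    rw [hPmem.1, hQmem.1, zero_add] at h0
    linear_combination (norm := abel) hsum - h0
  have hz0 : b * y - y * a = 0 := hc1b _ hzmem hkey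
  rw [huy, hyu]
  exact sub_eq_zero.mp hz0

end Steps
section Steps2

variable {R : Type*} [NonUnitalNonAssocRing R]

/-- Step: `a+b` commutes with `R₁₁` (hypothesis on `R₂₁`). -/
private lemma step11' (halt : IsAlt R)
    (htor2 : ∀ x : R, (2 : ℕ) • x = 0 → x = 0)
    (htor3 : ∀ x : R, (3 : ℕ) • x = 0 → x = 0)
    {e a b : R} (he : e * e = e)
    (hc2b : ∀ x ∈ P11 e, (∀ y ∈ P21 e, y * x = 0) → x = 0)
    (ha : a ∈ P11 e) (hb : b ∈ P22 e)
    (hcom : ∀ y ∈ P21 e, (a + b) * y = y * (a + b)) :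
    ∀ r ∈ P11 e, (a + b) * r = r * (a + b) := by
  intro r hr
  have hur : (a + b) * r = a * r := by
    rw [add_mul, P22_mul_P11 halt htor2 he hb hr, add_zero]
  have hru : r * (a + b) = r * a := by
    rw [mul_add, P11_mul_P22 halt htor2 he hr hb, add_zero]
  have hcmem : a * r - r * a ∈ P11 e :=
    P11_sub (P11_mul_P11 halt ha hr) (P11_mul_P11 halt hr ha)
  have hkey : ∀ y ∈ P21 e, y * (a * r - r * a) = 0 := by
    intro y hy
    have e2 : (a + b) * y - y * (a + b) = 0 := sub_eq_zero.mpr (hcom y hy)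
    have hry : r * y = 0 := P11_mul_P21 halt htor2 he hr hy
    have hcy : ((a + b) * r - r * (a + b)) * y = 0 := by
      rw [hur, hru]
      exact P11_mul_P21 halt htor2 he hcmem hy
    have h1 := comm_mul halt (a + b) r y
    rw [hcy, hry, mul_zero, zero_mul, e2, mul_zero] at h1
    have hA : asc (a + b) r y = 0 :=
      three_eq_zero htor3 (by linear_combination (norm := abel) -h1)
    have hB : asc (a + b) y r = 0 := by rw [asc_swap23 halt, hA, neg_zero]
    have eyr : (a + b) * (y * r) - (y * r) * (a + b) = 0 :=
      sub_eq_zero.mpr (hcom _ (P21_mul_P11 halt hy hr))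
    have h2 := comm_mul halt (a + b) y r
    rw [e2, zero_mul, eyr, hur, hru, hB] at h2
    linear_combination (norm := abel) h2
  have hc0 : a * r - r * a = 0 := hc2b _ hcmem hkey
  rw [hur, hru]
  exact sub_eq_zero.mp hc0

/-- Step: `a+b` commutes with `R₂₂` (hypothesis on `R₂₁`). -/
private lemma step22' (halt : IsAlt R)
    (htor2 : ∀ x : R, (2 : ℕ) • x = 0 → x = 0)
    (htor3 : ∀ x : R, (3 : ℕ) • x = 0 → x = 0)
    {e a b : R} (he : e * e = e)
    (hc3b : ∀ x ∈ P22 e, (∀ y ∈ P21 e, x * y = 0) → x = 0)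
    (ha : a ∈ P11 e) (hb : b ∈ P22 e)
    (hcom : ∀ y ∈ P21 e, (a + b) * y = y * (a + b)) :
    ∀ s ∈ P22 e, (a + b) * s = s * (a + b) := by
  intro s hs
  have hus : (a + b) * s = b * s := by
    rw [add_mul, P11_mul_P22 halt htor2 he ha hs, zero_add]
  have hsu : s * (a + b) = s * b := by
    rw [mul_add, P22_mul_P11 halt htor2 he hs ha, zero_add]
  have hdmem : b * s - s * b ∈ P22 e :=
    P22_sub (P22_mul_P22 halt hb hs) (P22_mul_P22 halt hs hb)
  have hkey : ∀ y ∈ P21 e, (b * s - s * b) * y = 0 := by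
    intro y hy
    have e2 : (a + b) * y - y * (a + b) = 0 := sub_eq_zero.mpr (hcom y hy)
    have hys : y * s = 0 := P21_mul_P22 halt htor2 he hy hs
    have hyd : y * ((a + b) * s - s * (a + b)) = 0 := by
      rw [hus, hsu]
      exact P21_mul_P22 halt htor2 he hy hdmem
    have h2 := comm_mul halt (a + b) y s
    rw [e2, zero_mul, hys, mul_zero, zero_mul, hyd] at h2
    have hC : asc (a + b) y s = 0 :=
      three_eq_zero htor3 (by linear_combination (norm := abel) -h2)
    have hD : asc (a + b) s y = 0 := by rw [asc_swap23 halt, hC, neg_zero]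
    have esy : (a + b) * (s * y) - (s * y) * (a + b) = 0 :=
      sub_eq_zero.mpr (hcom _ (P22_mul_P21 halt hs hy))
    have h1 := comm_mul halt (a + b) s y
    rw [esy, e2, mul_zero, hD, hus, hsu] at h1
    simpa using h1
  have hd0 : b * s - s * b = 0 := hc3b _ hdmem hkey
  rw [hus, hsu]
  exact sub_eq_zero.mp hd0

/-- Step: `a+b` commutes with `R₁₂` (hypothesis on `R₂₁`). -/
private lemma step12' (halt : IsAlt R)
    (htor2 : ∀ x : R, (2 : ℕ) • x = 0 → x = 0)
    {e a b : R} (he : e * e = e)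
    (hc1a : ∀ x ∈ P12 e, (∀ y ∈ P21 e, x * y = 0) → x = 0)
    (ha : a ∈ P11 e) (hb : b ∈ P22 e)
    (hcom : ∀ y ∈ P21 e, (a + b) * y = y * (a + b))
    (h11 : ∀ r ∈ P11 e, (a + b) * r = r * (a + b))
    (h22 : ∀ s ∈ P22 e, (a + b) * s = s * (a + b)) :
    ∀ x ∈ P12 e, (a + b) * x = x * (a + b) := by
  intro x hx
  have hux : (a + b) * x = a * x := by
    rw [add_mul, P22_mul_P12 halt htor2 he hb hx, add_zero]
  have hxu : x * (a + b) = x * b := by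
    rw [mul_add, P12_mul_P11 halt htor2 he hx ha, zero_add]
  have hzmem : a * x - x * b ∈ P12 e :=
    P12_sub (P11_mul_P12 halt ha hx) (P12_mul_P22 halt hx hb)
  have hkey : ∀ y ∈ P21 e, (a * x - x * b) * y = 0 := by
    intro y hy
    have e2 : (a + b) * y - y * (a + b) = 0 := sub_eq_zero.mpr (hcom y hy)
    have exy : (a + b) * (x * y) - (x * y) * (a + b) = 0 :=
      sub_eq_zero.mpr (h11 _ (P12_mul_P21 halt hx hy))
    have eyx : (a + b) * (y * x) - (y * x) * (a + b) = 0 :=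
      sub_eq_zero.mpr (h22 _ (P21_mul_P12 halt hy hx))
    have h1 := comm_mul halt (a + b) x y
    rw [exy, e2, mul_zero, hux, hxu] at h1
    have h2 := comm_mul halt (a + b) y x
    rw [e2, zero_mul, eyx, hux, hxu, asc_swap23 halt (a + b) y x] at h2
    have hsum : (a * x - x * b) * y + y * (a * x - x * b) = 0 := by
      linear_combination (norm := abel) h1 + h2
    have hPmem : (a * x - x * b) * y ∈ P11 e := P12_mul_P21 halt hzmem hy
    have hQmem : y * (a * x - x * b) ∈ P22 e := P21_mul_P12 halt hy hzmem
    have h0 := congrArg (fun w => e * w) hsum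
    simp only [mul_add, mul_zero] at h0
    rw [hPmem.1, hQmem.1, add_zero] at h0
    exact h0
  have hz0 : a * x - x * b = 0 := hc1a _ hzmem hkey
  rw [hux, hxu]
  exact sub_eq_zero.mp hz0

end Steps2

theorem stmt9 {R : Type*} [NonUnitalNonAssocRing R] (halt : IsAlt R)
    (htor2 : ∀ x : R, (2 : ℕ) • x = 0 → x = 0)
    (htor3 : ∀ x : R, (3 : ℕ) • x = 0 → x = 0)
    (e₁ : R) (he : e₁ * e₁ = e₁) (hne : e₁ ≠ 0)
    (hnu : ¬ ∀ x : R, e₁ * x = x ∧ x * e₁ = x)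
    (hc1 : (∀ x ∈ P12 e₁, (∀ y ∈ P21 e₁, x * y = 0) → x = 0) ∧
           (∀ x ∈ P21 e₁, (∀ y ∈ P12 e₁, x * y = 0) → x = 0))
    (hc2 : (∀ x ∈ P11 e₁, (∀ y ∈ P12 e₁, x * y = 0) → x = 0) ∧
           (∀ x ∈ P11 e₁, (∀ y ∈ P21 e₁, y * x = 0) → x = 0))
    (hc3 : (∀ x ∈ P22 e₁, (∀ y ∈ P12 e₁, y * x = 0) → x = 0) ∧
           (∀ x ∈ P22 e₁, (∀ y ∈ P21 e₁, x * y = 0) → x = 0)) :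
    (∀ a ∈ P11 e₁, ∀ b ∈ P22 e₁,
      (∀ x ∈ P12 e₁, (a + b) * x = x * (a + b)) → a + b ∈ rctr R) ∧
    (∀ a ∈ P11 e₁, ∀ b ∈ P22 e₁,
      (∀ x ∈ P21 e₁, (a + b) * x = x * (a + b)) → a + b ∈ rctr R) := by
  refine ⟨?_, ?_⟩
  · intro a ha b hb hcom
    have h11 := step11 halt htor2 htor3 he hc2.1 ha hb hcom
    have h22 := step22 halt htor2 htor3 he hc3.1 ha hb hcom
    have h21 := step21 halt htor2 he hc1.2 ha hb hcom h11 h22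
    show ∀ t : R, (a + b) * t = t * (a + b)
    intro t
    obtain ⟨p, hp, q, hq, u, hu, v, hv, ht⟩ := peirce_decomp halt he t
    rw [ht, mul_add, mul_add, mul_add, h11 p hp, hcom q hq, h21 u hu, h22 v hv,
        add_mul, add_mul, add_mul]
  · intro a ha b hb hcom
    have h11 := step11' halt htor2 htor3 he hc2.2 ha hb hcom
    have h22 := step22' halt htor2 htor3 he hc3.2 ha hb hcom
    have h12 := step12' halt htor2 he hc1.1 ha hb hcom h11 h22
    show ∀ t : R, (a + b) * t = t * (a + b)
    intro t
    obtain ⟨p, hp, q, hq, u, hu, v, hv, ht⟩ := peirce_decomp halt he t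
    rw [ht, mul_add, mul_add, mul_add, h11 p hp, h12 q hq, hcom u hu, h22 v hv,
        add_mul, add_mul, add_mul]
end
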